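/- arXiv:1405.5997 — 6 statements merged into one kernel-verified Lean document; each statement's English description precedes it below -/
import Mathlib

section
/- For every real ρ > 0 and every integer K ≥ 1, there exists a unique two-choice profile for (ρ, K); that is, there is exactly one vector (v_0, v_1, …, v_K) ∈ ℝ^{K+1} with 1 = v_0 ≥ v_1 ≥ … ≥ v_K ≥ 0 satisfying, with the convention v_{K+1} = 0, v_k − v_{k+1} = ρ(v_{k−1}² − v_k²) for every 1 ≤ k ≤ K. -/
open Finset Real

noncomputable section

/-- Extend a vector `v = (v_0, …, v_K) ∈ ℝ^{K+1}` to `ℕ → ℝ` by zero,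
implementing the convention `v_{K+1} = 0`. -/
def extProfile (K : ℕ) (v : Fin (K + 1) → ℝ) : ℕ → ℝ :=
  fun k => if h : k < K + 1 then v ⟨k, h⟩ else 0

/-- `v = (v_0, …, v_K)` is a two-choice profile for `(ρ, K)`:
`1 = v_0 ≥ v_1 ≥ … ≥ v_K ≥ 0` and, with the convention `v_{K+1} = 0`,
`v_k − v_{k+1} = ρ (v_{k−1}² − v_k²)` for every `1 ≤ k ≤ K`. -/
def IsTwoChoiceProfile (ρ : ℝ) (K : ℕ) (v : Fin (K + 1) → ℝ) : Prop :=
  extProfile K v 0 = 1 ∧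
  (∀ k < K, extProfile K v (k + 1) ≤ extProfile K v k) ∧
  0 ≤ extProfile K v K ∧
  ∀ k, 1 ≤ k → k ≤ K →
    extProfile K v k - extProfile K v (k + 1) =
      ρ * ((extProfile K v (k - 1)) ^ 2 - (extProfile K v k) ^ 2)

/-- When it exists, the unique two-choice profile for `(ρ, K)`, denoted `ν_{ρ,K}`. -/
def nu (ρ : ℝ) (K : ℕ) : Fin (K + 1) → ℝ :=
  Classical.epsilon (IsTwoChoiceProfile ρ K)

/-- `ν_{ρ,K}` viewed as a function on `ℕ` (with `ν_{ρ,K}(K+1) = 0`). -/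
def nuV (ρ : ℝ) (K : ℕ) : ℕ → ℝ := extProfile K (nu ρ K)

/-- `P(ρ, K) = (1 − ν_{ρ,K}(1)) + ν_{ρ,K}(K)`, the limiting proportion of
problematic (empty or full) queues. -/
def propProblematic (ρ : ℝ) (K : ℕ) : ℝ := (1 - nuV ρ K 1) + nuV ρ K K


noncomputable def useq (ρ t : ℝ) : ℕ → ℝ
  | 0 => 0
  | n + 1 => Real.sqrt (t ^ 2 + useq ρ t n / ρ)

lemma useq_nonneg (ρ t : ℝ) (n : ℕ) : 0 ≤ useq ρ t n := by
  cases n <;> simp [useq, Real.sqrt_nonneg]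

lemma useq_arg_nonneg (ρ t : ℝ) (hρ : 0 < ρ) (n : ℕ) :
    0 ≤ t ^ 2 + useq ρ t n / ρ :=
  add_nonneg (sq_nonneg t) (div_nonneg (useq_nonneg ρ t n) hρ.le)

lemma useq_sq (ρ t : ℝ) (hρ : 0 < ρ) (n : ℕ) :
    useq ρ t (n + 1) ^ 2 = t ^ 2 + useq ρ t n / ρ := by
  simp only [useq]
  exact Real.sq_sqrt (useq_arg_nonneg ρ t hρ n)

lemma useq_succ_le (ρ t : ℝ) (hρ : 0 < ρ) (n : ℕ) :
    useq ρ t n ≤ useq ρ t (n + 1) := by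
  induction n with
  | zero => simpa [useq] using Real.sqrt_nonneg _
  | succ n ih =>
      simp only [useq]
      apply Real.sqrt_le_sqrt
      exact add_le_add_right ((div_le_div_iff_of_pos_right hρ).mpr ih) _

lemma useq_mono_n (ρ t : ℝ) (hρ : 0 < ρ) : Monotone (useq ρ t) :=
  monotone_nat_of_le_succ (useq_succ_le ρ t hρ)

lemma useq_le_t (ρ : ℝ) (hρ : 0 < ρ) {t t' : ℝ} (ht : 0 ≤ t) (htt : t ≤ t') (n : ℕ) :
    useq ρ t n ≤ useq ρ t' n := by
  induction n with
  | zero => simp [useq]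
  | succ n ih =>
      simp only [useq]
      apply Real.sqrt_le_sqrt
      have h2 : t ^ 2 ≤ t' ^ 2 := pow_le_pow_left₀ ht htt 2
      exact add_le_add h2 ((div_le_div_iff_of_pos_right hρ).mpr ih)

lemma useq_lt_t (ρ : ℝ) (hρ : 0 < ρ) {t t' : ℝ} (ht : 0 ≤ t) (htt : t < t') (n : ℕ) :
    useq ρ t (n + 1) < useq ρ t' (n + 1) := by
  simp only [useq]
  apply Real.sqrt_lt_sqrt (useq_arg_nonneg ρ t hρ n)
  have h2 : t ^ 2 < t' ^ 2 := by
    apply pow_lt_pow_left₀ htt ht; norm_num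
  exact add_lt_add_of_lt_of_le h2
    ((div_le_div_iff_of_pos_right hρ).mpr (useq_le_t ρ hρ ht htt.le n))

lemma useq_continuous (ρ : ℝ) (n : ℕ) : Continuous (fun t => useq ρ t n) := by
  induction n with
  | zero => simpa [useq] using continuous_const
  | succ n ih =>
      simp only [useq]
      exact Real.continuous_sqrt.comp (((continuous_pow 2).add (ih.div_const ρ)))

lemma useq_zero (ρ : ℝ) (n : ℕ) : useq ρ 0 n = 0 := by
  induction n with
  | zero => rfl
  | succ n ih => simp [useq, ih]

lemma useq_one (ρ : ℝ) (hρ : 0 < ρ) {n : ℕ} (hn : 1 ≤ n) : 1 ≤ useq ρ 1 n := by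
  have h1 : useq ρ 1 1 = 1 := by simp [useq]
  calc (1:ℝ) = useq ρ 1 1 := h1.symm
    _ ≤ useq ρ 1 n := useq_mono_n ρ 1 hρ hn

lemma ext_top (K : ℕ) (v : Fin (K + 1) → ℝ) : extProfile K v (K + 1) = 0 := by
  simp [extProfile]

lemma ext_of_lt (K : ℕ) (v : Fin (K + 1) → ℝ) {k : ℕ} (hk : k < K + 1) :
    extProfile K v k = v ⟨k, hk⟩ := by
  simp [extProfile, hk]

/-- the candidate profile for parameter t -/
noncomputable def cand (ρ t : ℝ) (K : ℕ) : Fin (K + 1) → ℝ := fun k => useq ρ t (K + 1 - k)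

lemma ext_cand (ρ t : ℝ) (K : ℕ) {k : ℕ} (hk : k ≤ K + 1) :
    extProfile K (cand ρ t K) k = useq ρ t (K + 1 - k) := by
  rcases lt_or_eq_of_le hk with h | h
  · rw [ext_of_lt K _ h]; rfl
  · subst h; rw [ext_top]; simp [useq]

lemma cand_isProfile (ρ t : ℝ) (hρ : 0 < ρ) (K : ℕ)
    (h1 : useq ρ t (K + 1) = 1) : IsTwoChoiceProfile ρ K (cand ρ t K) := by
  refine ⟨?_, ?_, ?_, ?_⟩
  · rw [ext_cand ρ t K (by omega)]; simpa using h1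
  · intro k hk
    rw [ext_cand ρ t K (by omega), ext_cand ρ t K (by omega)]
    exact useq_mono_n ρ t hρ (by omega)
  · rw [ext_cand ρ t K (by omega)]
    exact useq_nonneg ρ t _
  · intro k hk1 hkK
    obtain ⟨n, hn⟩ : ∃ n, K = k + n := ⟨K - k, by omega⟩
    rw [ext_cand ρ t K (by omega), ext_cand ρ t K (by omega),
        ext_cand ρ t K (by omega)]
    have e1 : K + 1 - k = n + 1 := by omega
    have e2 : K + 1 - (k + 1) = n := by omega
    have e3 : K + 1 - (k - 1) = n + 2 := by omega
    rw [e1, e2, e3, useq_sq ρ t hρ (n + 1), useq_sq ρ t hρ n]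
    field_simp
    ring

lemma profile_ext_eq (ρ : ℝ) (hρ : 0 < ρ) (K : ℕ) (v : Fin (K + 1) → ℝ)
    (hv : IsTwoChoiceProfile ρ K v) :
    ∀ n ≤ K + 1, extProfile K v (K + 1 - n) = useq ρ (extProfile K v K) n := by
  obtain ⟨h0, hmono, hKnn, heq⟩ := hv
  set t := extProfile K v K with htdef
  -- nonnegativity of all entries
  have hnn : ∀ j, 0 ≤ extProfile K v (K - j) := by
    intro j
    induction j with
    | zero => simpa using hKnn
    | succ j ih =>
        by_cases hj : j < K
        · have h : K - (j + 1) + 1 = K - j := by omega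
          have := hmono (K - (j + 1)) (by omega)
          rw [h] at this
          exact le_trans ih this
        · have h : K - (j + 1) = K - j := by omega
          rw [h]; exact ih
  have hnn' : ∀ k ≤ K, 0 ≤ extProfile K v k := by
    intro k hk
    have : k = K - (K - k) := by omega
    rw [this]; exact hnn (K - k)
  -- squared relation
  have hsq : ∀ j ≤ K, (extProfile K v (K - j)) ^ 2 = t ^ 2 + extProfile K v (K - j + 1) / ρ := by
    intro j hj
    induction j with
    | zero => simp [ext_top, htdef]
    | succ j ih =>
        have ihj := ih (by omega)
        have hk1 : 1 ≤ K - j := by omega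
        have hkK : K - j ≤ K := by omega
        have heqk := heq (K - j) hk1 hkK
        have e1 : K - j - 1 = K - (j + 1) := by omega
        have e2 : K - (j + 1) + 1 = K - j := by omega
        rw [e1] at heqk
        rw [e2]
        have hρ' : ρ ≠ 0 := hρ.ne'
        have key : extProfile K v (K - (j + 1)) ^ 2 - extProfile K v (K - j) ^ 2 =
            (extProfile K v (K - j) - extProfile K v (K - j + 1)) / ρ := by
          rw [eq_div_iff hρ']
          linear_combination -heqk
        rw [sub_div] at key
        linarith [ihj, key]
  -- main induction
  intro n hn
  induction n with
  | zero => simp [ext_top, useq]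
  | succ n ih =>
      have ihn := ih (by omega)
      have e1 : K + 1 - (n + 1) = K - n := by omega
      have e2 : K - n + 1 = K + 1 - n := by omega
      rw [e1]
      have hsqn := hsq n (by omega)
      rw [e2, ihn] at hsqn
      have hnneg : 0 ≤ extProfile K v (K - n) := hnn' _ (by omega)
      have : extProfile K v (K - n) = Real.sqrt ((extProfile K v (K - n)) ^ 2) :=
        (Real.sqrt_sq hnneg).symm
      rw [this, hsqn]
      simp [useq]


/-- For every real ρ > 0 and every integer K ≥ 1, there exists a unique
two-choice profile for (ρ, K). -/
theorem two_choice_profile_exists_unique (ρ : ℝ) (hρ : 0 < ρ) (K : ℕ) (hK : 1 ≤ K) :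
    ∃! v : Fin (K + 1) → ℝ, IsTwoChoiceProfile ρ K v := by
  have hcont : ContinuousOn (fun t => useq ρ t (K + 1)) (Set.Icc 0 1) :=
    (useq_continuous ρ (K + 1)).continuousOn
  have hmem : (1 : ℝ) ∈ Set.Icc (useq ρ 0 (K + 1)) (useq ρ 1 (K + 1)) := by
    constructor
    · rw [useq_zero]; norm_num
    · exact useq_one ρ hρ (by omega)
  obtain ⟨t₀, ht₀mem, ht₀'⟩ := intermediate_value_Icc (by norm_num : (0:ℝ) ≤ 1) hcont hmem
  have ht₀ : useq ρ t₀ (K + 1) = 1 := ht₀'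
  have ht₀0 : 0 ≤ t₀ := ht₀mem.1
  refine ⟨cand ρ t₀ K, cand_isProfile ρ t₀ hρ K ht₀, ?_⟩
  intro v hv
  have hKnn : 0 ≤ extProfile K v K := hv.2.2.1
  have h01 : extProfile K v 0 = 1 := hv.1
  set t := extProfile K v K with htdef
  have hext := profile_ext_eq ρ hρ K v hv
  have h1 : useq ρ t (K + 1) = 1 := by
    have h := hext (K + 1) le_rfl
    rw [Nat.sub_self, h01] at h
    exact h.symm
  have htt : t = t₀ := by
    rcases lt_trichotomy t t₀ with h | h | h
    · have hlt := useq_lt_t ρ hρ hKnn h K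
      rw [h1, ht₀] at hlt; exact absurd hlt (lt_irrefl 1)
    · exact h
    · have hlt := useq_lt_t ρ hρ ht₀0 h K
      rw [h1, ht₀] at hlt; exact absurd hlt (lt_irrefl 1)
  funext k
  have hk : (k : ℕ) < K + 1 := k.isLt
  have hv1 : v k = extProfile K v k := by rw [ext_of_lt K v hk]
  have hv2 : cand ρ t₀ K k = useq ρ t₀ (K + 1 - (k : ℕ)) := rfl
  have hn : K + 1 - (K + 1 - (k : ℕ)) = (k : ℕ) := by omega
  have h := hext (K + 1 - (k : ℕ)) (by omega)
  rw [hn] at h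
  rw [hv1, hv2, h, ← htdef, htt]
end
end

section
/- Let K ≥ 1 be an integer and let 0 < ρ ≤ ρ′. If v is a two-choice profile for (ρ, K) and v′ is a two-choice profile for (ρ′, K), then v_k ≤ v′_k for every 0 ≤ k ≤ K. In particular, for each k the map ρ ↦ ν_{ρ,K}(k) is nondecreasing in ρ. -/
open Finset Real

noncomputable section

lemma extProfile_eq_zero {K : ℕ} (v : Fin (K+1) → ℝ) {n : ℕ} (h : K < n) :
    extProfile K v n = 0 := by
  unfold extProfile
  rw [dif_neg]; omega

lemma profile_anti {ρ : ℝ} {K : ℕ} {v : Fin (K+1) → ℝ}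
    (hv : IsTwoChoiceProfile ρ K v) :
    ∀ i j, i ≤ j → j ≤ K → extProfile K v j ≤ extProfile K v i := by
  obtain ⟨h0, hmono, hnn, hrec⟩ := hv
  intro i j
  induction j with
  | zero =>
    intro h1 _
    have : i = 0 := by omega
    rw [this]
  | succ n ih =>
    intro h1 h2
    rcases eq_or_lt_of_le h1 with h | h
    · rw [h]
    · exact (hmono n (by omega)).trans (ih (by omega) (by omega))

lemma profile_nonneg {ρ : ℝ} {K : ℕ} {v : Fin (K+1) → ℝ}
    (hv : IsTwoChoiceProfile ρ K v) : ∀ j, j ≤ K → 0 ≤ extProfile K v j := by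
  intro j hj
  exact hv.2.2.1.trans (profile_anti hv j K hj le_rfl)

lemma profile_tele {ρ : ℝ} {K : ℕ} {v : Fin (K+1) → ℝ}
    (hv : IsTwoChoiceProfile ρ K v) :
    ∀ k, 1 ≤ k → k ≤ K →
      extProfile K v k =
        ρ * ((extProfile K v (k - 1)) ^ 2 - (extProfile K v K) ^ 2) := by
  obtain ⟨h0, hmono, hnn, hrec⟩ := hv
  have H : ∀ m, m + 1 ≤ K →
      extProfile K v (K - m) =
        ρ * ((extProfile K v (K - m - 1)) ^ 2 - (extProfile K v K) ^ 2) := by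
    intro m
    induction m with
    | zero =>
      intro h
      have t := hrec K (by omega) le_rfl
      rw [extProfile_eq_zero v (by omega : K < K + 1)] at t
      simpa using t
    | succ n ih =>
      intro h
      have ihh := ih (by omega)
      have t := hrec (K - (n+1)) (by omega) (by omega)
      have e1 : K - (n+1) + 1 = K - n := by omega
      have e2 : K - n - 1 = K - (n+1) := by omega
      rw [e1] at t
      rw [e2] at ihh
      rw [ihh] at t
      linarith [t]
  intro k hk1 hkK
  have H2 := H (K - k) (by omega)
  have e : K - (K - k) = k := by omega
  rw [e] at H2
  exact H2

set_option maxHeartbeats 1000000 in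
lemma aux_main (K : ℕ) (hK : 1 ≤ K) (ρ ρ' : ℝ)
    (hρ : 0 < ρ) (hρρ' : ρ ≤ ρ')
    (v v' : Fin (K + 1) → ℝ)
    (hv : IsTwoChoiceProfile ρ K v) (hv' : IsTwoChoiceProfile ρ' K v') :
    ∀ k : Fin (K + 1), v k ≤ v' k := by
  have hρ' : 0 < ρ' := lt_of_lt_of_le hρ hρρ'
  have fnn := profile_nonneg hv
  have fnn' := profile_nonneg hv'
  have tv := profile_tele hv
  have tv' := profile_tele hv'
  have anti' := profile_anti hv'
  obtain ⟨h0, hmono, hnn, hrec⟩ := hv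
  obtain ⟨h0', hmono', hnn', hrec'⟩ := hv'
  -- Step A : v_K ≤ v'_K
  have hA : extProfile K v K ≤ extProfile K v' K := by
    by_contra hcon
    push_neg at hcon
    have down : ∀ m, m ≤ K → extProfile K v' (K - m) < extProfile K v (K - m) := by
      intro m hm
      induction m with
      | zero => simpa using hcon
      | succ n ih =>
        have ihh := ih (by omega)
        have e1 : K - n = K - (n+1) + 1 := by omega
        rw [e1] at ihh
        have t := tv (K - (n+1) + 1) (by omega) (by omega)
        have t' := tv' (K - (n+1) + 1) (by omega) (by omega)
        simp only [Nat.add_sub_cancel] at t t'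
        have hge : 0 ≤ (extProfile K v (K - (n+1))) ^ 2 - (extProfile K v K) ^ 2 := by
          have h1 := fnn (K - (n+1) + 1) (by omega)
          nlinarith [t]
        have key : ρ' * ((extProfile K v' (K - (n+1))) ^ 2 - (extProfile K v' K) ^ 2)
            < ρ' * ((extProfile K v (K - (n+1))) ^ 2 - (extProfile K v K) ^ 2) := by
          calc ρ' * ((extProfile K v' (K - (n+1))) ^ 2 - (extProfile K v' K) ^ 2)
              = extProfile K v' (K - (n+1) + 1) := t'.symm
            _ < extProfile K v (K - (n+1) + 1) := ihh
            _ = ρ * ((extProfile K v (K - (n+1))) ^ 2 - (extProfile K v K) ^ 2) := t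
            _ ≤ ρ' * ((extProfile K v (K - (n+1))) ^ 2 - (extProfile K v K) ^ 2) := by
                nlinarith
        have key2 := (mul_lt_mul_iff_right₀ hρ').mp key
        have hsq : (extProfile K v' (K - (n+1))) ^ 2 < (extProfile K v (K - (n+1))) ^ 2 := by
          nlinarith [fnn' K le_rfl, hcon]
        exact lt_of_pow_lt_pow_left₀ 2 (fnn (K - (n+1)) (by omega)) hsq
    have hend := down K le_rfl
    simp only [Nat.sub_self] at hend
    rw [h0, h0'] at hend
    exact lt_irrefl 1 hend
  -- Step B : all indices
  have hB : ∀ k, k ≤ K → extProfile K v k ≤ extProfile K v' k := by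
    by_contra hcon
    push_neg at hcon
    classical
    obtain ⟨kw, hkw1, hkw2⟩ := hcon
    have hEx : ∃ k, k ≤ K ∧ extProfile K v' k < extProfile K v k := ⟨kw, hkw1, hkw2⟩
    obtain ⟨hk₀K, hk₀v⟩ := Nat.find_spec hEx
    set k₀ := Nat.find hEx with hk₀def
    have hk₀pos : 1 ≤ k₀ := by
      rcases Nat.eq_zero_or_pos k₀ with h | h
      · rw [h, h0, h0'] at hk₀v; exact absurd hk₀v (lt_irrefl 1)
      · exact h
    have hprev : extProfile K v (k₀ - 1) ≤ extProfile K v' (k₀ - 1) := by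
      have h := Nat.find_min hEx (show k₀ - 1 < k₀ by omega)
      push_neg at h
      exact h (by omega)
    clear hk₀def
    clear_value k₀
    -- greatest violation index
    have hksP : extProfile K v' (Nat.findGreatest
        (fun k => extProfile K v' k < extProfile K v k) K) <
        extProfile K v (Nat.findGreatest
        (fun k => extProfile K v' k < extProfile K v k) K) :=
      Nat.findGreatest_spec (P := fun k => extProfile K v' k < extProfile K v k) hk₀K hk₀v
    set ks := Nat.findGreatest (fun k => extProfile K v' k < extProfile K v k) K
      with hksdef
    have hksK : ks ≤ K := Nat.findGreatest_le K
    have hksltK : ks < K := by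
      rcases eq_or_lt_of_le hksK with h | h
      · exfalso; rw [h] at hksP; exact absurd hA (not_le.mpr hksP)
      · exact h
    have hk₀ks : k₀ ≤ ks := Nat.le_findGreatest (P := fun k => extProfile K v' k < extProfile K v k) hk₀K hk₀v
    have hnext : extProfile K v (ks + 1) ≤ extProfile K v' (ks + 1) := by
      have h := Nat.findGreatest_is_greatest (Nat.lt_succ_self ks) (by omega)
      exact not_lt.mp h
    clear hksdef
    clear_value ks
    -- telescoped identities
    have t1 := tv (ks + 1) (by omega) (by omega)
    have t1' := tv' (ks + 1) (by omega) (by omega)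
    simp only [Nat.add_sub_cancel] at t1 t1'
    have t0 := tv k₀ hk₀pos hk₀K
    have t0' := tv' k₀ hk₀pos hk₀K
    have ha'nn : 0 ≤ extProfile K v' ks := fnn' ks hksK
    have hbnn : 0 ≤ extProfile K v (k₀ - 1) := fnn (k₀ - 1) (by omega)
    have hsq_a : (extProfile K v' ks) ^ 2 < (extProfile K v ks) ^ 2 := by
      nlinarith [hksP]
    have hsq_b : (extProfile K v (k₀ - 1)) ^ 2 ≤ (extProfile K v' (k₀ - 1)) ^ 2 := by
      nlinarith [hprev, hbnn]
    have hmono_ab : extProfile K v' ks ≤ extProfile K v' (k₀ - 1) :=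
      anti' (k₀ - 1) ks (by omega) hksK
    have hsq_ab : (extProfile K v' ks) ^ 2 ≤ (extProfile K v' (k₀ - 1)) ^ 2 := by
      nlinarith [ha'nn, hmono_ab]
    have m1 : ρ * (extProfile K v' ks) ^ 2 < ρ * (extProfile K v ks) ^ 2 :=
      (mul_lt_mul_iff_right₀ hρ).mpr hsq_a
    have m2 : ρ * (extProfile K v (k₀ - 1)) ^ 2 ≤ ρ * (extProfile K v' (k₀ - 1)) ^ 2 :=
      (mul_le_mul_iff_right₀ hρ).mpr hsq_b
    have m3 : (ρ' - ρ) * (extProfile K v' ks) ^ 2 ≤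
        (ρ' - ρ) * (extProfile K v' (k₀ - 1)) ^ 2 :=
      mul_le_mul_of_nonneg_left hsq_ab (by linarith)
    linarith [t0, t0', t1, t1', hnext, hk₀v, m1, m2, m3]
  intro k
  have hk := hB k.val (by omega)
  have e : extProfile K v k.val = v k := by
    simp [extProfile, k.isLt]
  have e' : extProfile K v' k.val = v' k := by
    simp [extProfile, k.isLt]
  rwa [e, e'] at hk

/-- monotonicity of the two-choice profile in ρ; in particular
 is nondecreasing. -/
theorem two_choice_profile_monotone (K : ℕ) (hK : 1 ≤ K) (ρ ρ' : ℝ)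
    (hρ : 0 < ρ) (hρρ' : ρ ≤ ρ')
    (v v' : Fin (K + 1) → ℝ)
    (hv : IsTwoChoiceProfile ρ K v) (hv' : IsTwoChoiceProfile ρ' K v') :
    (∀ k : Fin (K + 1), v k ≤ v' k) ∧
    (∀ k : Fin (K + 1), nu ρ K k ≤ nu ρ' K k) := by
  have hnu : IsTwoChoiceProfile ρ K (nu ρ K) :=
    Classical.epsilon_spec (p := IsTwoChoiceProfile ρ K) ⟨v, hv⟩
  have hnu' : IsTwoChoiceProfile ρ' K (nu ρ' K) :=
    Classical.epsilon_spec (p := IsTwoChoiceProfile ρ' K) ⟨v', hv'⟩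
  exact ⟨aux_main K hK ρ ρ' hρ hρρ' v v' hv hv',
    aux_main K hK ρ ρ' hρ hρρ' _ _ hnu hnu'⟩
end
end

section
/- Let C ≥ 1 be an integer, let α_1, …, α_C > 0 with α_1 + … + α_C = 1, let K_1, …, K_C ≥ 1 be integers, let r_1, …, r_C ∈ (0, 1] with max_i r_i = 1, let Λ > 0 and s > 0. Then there exists a unique pair (ρ, u) with ρ > 0 and u = (u_{i,k})_{1 ≤ i ≤ C, 0 ≤ k ≤ K_i} such that: for each i, (u_{i,0}, …, u_{i,K_i}) is a two-choice profile for (ρ r_i, K_i), and s = Λρ + Σ_{c=1}^{C} α_c Σ_{k=1}^{K_c} u_{c,k}. Moreover u_{i,k} = ν_{ρ r_i, K_i}(k) for all i, k. -/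
open Finset Real

noncomputable section

namespace TCPaux

/-- Backward recursion: `W ρ m n` is `v_{K-n}` when `v_K = m`. -/
def W (ρ m : ℝ) : ℕ → ℝ
  | 0 => m
  | n+1 => Real.sqrt (W ρ m n / ρ + m ^ 2)

lemma W_nonneg (ρ : ℝ) {m : ℝ} (hm : 0 ≤ m) : ∀ n, 0 ≤ W ρ m n
  | 0 => hm
  | (n+1) => Real.sqrt_nonneg _

lemma W_zero (ρ : ℝ) : ∀ n, W ρ 0 n = 0
  | 0 => rfl
  | (n+1) => by simp [W, W_zero ρ n]

lemma W_succ_sq {ρ m : ℝ} (hρ : 0 < ρ) (hm : 0 ≤ m) (n : ℕ) :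
    W ρ m (n+1) ^ 2 = W ρ m n / ρ + m ^ 2 := by
  have h : 0 ≤ W ρ m n / ρ + m ^ 2 :=
    add_nonneg (div_nonneg (W_nonneg ρ hm n) hρ.le) (sq_nonneg m)
  simp [W, Real.sq_sqrt h]

lemma W_succ_eq {ρ m : ℝ} (hρ : 0 < ρ) (hm : 0 ≤ m) (n : ℕ) :
    W ρ m n = ρ * (W ρ m (n+1) ^ 2 - m ^ 2) := by
  have := W_succ_sq hρ hm n
  field_simp at this ⊢
  linarith

lemma W_le_succ {ρ m : ℝ} (hρ : 0 < ρ) (hm : 0 ≤ m) : ∀ n, W ρ m n ≤ W ρ m (n+1)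
  | 0 => by
      have : m = Real.sqrt (m ^ 2) := by rw [Real.sqrt_sq hm]
      rw [show W ρ m 1 = Real.sqrt (m / ρ + m ^ 2) from rfl]
      nth_rewrite 1 [this]
      exact Real.sqrt_le_sqrt (le_add_of_nonneg_left (div_nonneg hm hρ.le))
  | (n+1) => by
      have ih := W_le_succ hρ hm n
      show Real.sqrt _ ≤ Real.sqrt _
      apply Real.sqrt_le_sqrt
      have : W ρ m n / ρ ≤ W ρ m (n+1) / ρ := by gcongr
      linarith

lemma W_mono_n {ρ m : ℝ} (hρ : 0 < ρ) (hm : 0 ≤ m) : Monotone (W ρ m) :=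
  monotone_nat_of_le_succ (W_le_succ hρ hm)

lemma W_lt_of_lt {ρ : ℝ} (hρ : 0 < ρ) {a b : ℝ} (ha : 0 ≤ a) (hab : a < b) :
    ∀ n, W ρ a n < W ρ b n
  | 0 => hab
  | (n+1) => by
      have ih := W_lt_of_lt hρ ha hab n
      show Real.sqrt _ < Real.sqrt _
      apply Real.sqrt_lt_sqrt
      · exact add_nonneg (div_nonneg (W_nonneg ρ ha n) hρ.le) (sq_nonneg a)
      · have h1 : W ρ a n / ρ < W ρ b n / ρ := div_lt_div_of_pos_right ih hρ
        have h2 : a ^ 2 < b ^ 2 := by nlinarith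
        linarith

lemma W_le_of_le {ρ : ℝ} (hρ : 0 < ρ) {a b : ℝ} (ha : 0 ≤ a) (hab : a ≤ b) (n : ℕ) :
    W ρ a n ≤ W ρ b n := by
  rcases eq_or_lt_of_le hab with h | h
  · subst h; rfl
  · exact (W_lt_of_lt hρ ha h n).le

lemma W_continuousAt {ρ₀ m₀ : ℝ} (hρ : ρ₀ ≠ 0) (n : ℕ) :
    ContinuousAt (fun p : ℝ × ℝ => W p.1 p.2 n) (ρ₀, m₀) := by
  induction n with
  | zero => exact continuous_snd.continuousAt
  | succ n ih =>
      have : ContinuousAt (fun p : ℝ × ℝ => W p.1 p.2 n / p.1 + p.2 ^ 2) (ρ₀, m₀) :=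
        (ih.div continuous_fst.continuousAt hρ).add (continuous_snd.continuousAt.pow 2)
      exact (Real.continuous_sqrt.continuousAt.comp this : _)


lemma W_one_le {ρ : ℝ} (hρ : 0 < ρ) (n : ℕ) : 1 ≤ W ρ 1 n := by
  have := W_mono_n hρ (by norm_num : (0:ℝ) ≤ 1) (Nat.zero_le n)
  simpa [W] using this

lemma exists_mroot {ρ : ℝ} (hρ : 0 < ρ) (K : ℕ) :
    ∃ m, m ∈ Set.Icc (0:ℝ) 1 ∧ W ρ m K = 1 := by
  have hcont : ContinuousOn (fun m => W ρ m K) (Set.Icc 0 1) := by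
    intro m hm
    have : ContinuousAt (fun m => W ρ m K) m := by
      have := (W_continuousAt (ρ₀ := ρ) (m₀ := m) hρ.ne' K)
      exact this.comp (Continuous.continuousAt (by continuity : Continuous fun m : ℝ => ((ρ, m) : ℝ × ℝ)))
    exact this.continuousWithinAt
  have h01 : (1:ℝ) ∈ Set.Icc (W ρ 0 K) (W ρ 1 K) := by
    constructor
    · rw [W_zero]; norm_num
    · exact W_one_le hρ K
  have := intermediate_value_Icc (by norm_num : (0:ℝ) ≤ 1) hcont h01
  obtain ⟨m, hm, hWm⟩ := this
  exact ⟨m, hm, hWm⟩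

/-- the unique `m = v_K ≥ 0` with `W ρ m K = 1`. -/
def mroot (ρ : ℝ) (K : ℕ) : ℝ :=
  if h : 0 < ρ then (exists_mroot h K).choose else 0

lemma mroot_mem {ρ : ℝ} (hρ : 0 < ρ) (K : ℕ) : mroot ρ K ∈ Set.Icc (0:ℝ) 1 := by
  rw [mroot, dif_pos hρ]; exact (exists_mroot hρ K).choose_spec.1

lemma mroot_nonneg {ρ : ℝ} (hρ : 0 < ρ) (K : ℕ) : 0 ≤ mroot ρ K := (mroot_mem hρ K).1

lemma W_mroot {ρ : ℝ} (hρ : 0 < ρ) (K : ℕ) : W ρ (mroot ρ K) K = 1 := by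
  rw [mroot, dif_pos hρ]; exact (exists_mroot hρ K).choose_spec.2

lemma mroot_unique {ρ : ℝ} (hρ : 0 < ρ) {K : ℕ} {m : ℝ} (hm : 0 ≤ m)
    (hW : W ρ m K = 1) : m = mroot ρ K := by
  rcases lt_trichotomy m (mroot ρ K) with h | h | h
  · have := W_lt_of_lt hρ hm h K
    rw [hW, W_mroot hρ] at this; exact absurd this (lt_irrefl 1)
  · exact h
  · have := W_lt_of_lt hρ (mroot_nonneg hρ K) h K
    rw [hW, W_mroot hρ] at this; exact absurd this (lt_irrefl 1)

lemma mroot_continuousAt {ρ₀ : ℝ} (hρ : 0 < ρ₀) (K : ℕ) :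
    ContinuousAt (fun ρ => mroot ρ K) ρ₀ := by
  rw [Metric.continuousAt_iff]
  intro ε hε
  set m₀ := mroot ρ₀ K with hm₀
  -- upper bound control
  have hWup : 1 < W ρ₀ (m₀ + ε) K := by
    have := W_lt_of_lt hρ (mroot_nonneg hρ K) (by linarith : m₀ < m₀ + ε) K
    rwa [W_mroot hρ] at this
  have hcρ : ∀ m : ℝ, ContinuousAt (fun ρ => W ρ m K) ρ₀ := by
    intro m
    show ContinuousAt ((fun p : ℝ × ℝ => W p.1 p.2 K) ∘ (fun ρ : ℝ => ((ρ, m) : ℝ × ℝ))) ρ₀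
    exact ContinuousAt.comp (W_continuousAt (ρ₀ := ρ₀) (m₀ := m) hρ.ne' K)
      (continuous_id.prodMk continuous_const).continuousAt
  have hup : ∀ᶠ ρ in nhds ρ₀, 1 < W ρ (m₀ + ε) K :=
    (hcρ (m₀ + ε)).eventually_const_lt (by simpa using hWup)
  have hlow : ∀ᶠ ρ in nhds ρ₀, (0 ≤ m₀ - ε → W ρ (m₀ - ε) K < 1) := by
    rcases le_or_gt 0 (m₀ - ε) with h | h
    · have hWdown : W ρ₀ (m₀ - ε) K < 1 := by
        have := W_lt_of_lt hρ h (by linarith : m₀ - ε < m₀) K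
        rwa [W_mroot hρ] at this
      exact ((hcρ (m₀ - ε)).eventually_lt_const hWdown).mono (fun ρ h _ => h)
    · exact Filter.Eventually.of_forall (fun ρ hh => absurd hh (not_le.mpr h))
  have hpos : ∀ᶠ ρ in nhds ρ₀, 0 < ρ := Filter.tendsto_id.eventually_const_lt hρ
  have := (hup.and (hlow.and hpos)).exists_mem
  obtain ⟨U, hU, hUprop⟩ := this
  obtain ⟨δ, hδ, hball⟩ := Metric.mem_nhds_iff.mp hU
  refine ⟨δ, hδ, ?_⟩
  intro ρ hρρ₀
  obtain ⟨h1, h2, h3⟩ := hUprop ρ (hball hρρ₀)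
  -- mroot ρ K < m₀ + ε
  have hub : mroot ρ K < m₀ + ε := by
    by_contra hcon
    push_neg at hcon
    have := W_le_of_le h3 (by linarith [mroot_nonneg hρ K] : (0:ℝ) ≤ m₀ + ε) hcon K
    rw [W_mroot h3] at this
    linarith
  have hlb : m₀ - ε < mroot ρ K := by
    rcases le_or_gt 0 (m₀ - ε) with h | h
    · by_contra hcon
      push_neg at hcon
      have := W_le_of_le h3 (mroot_nonneg h3 K) hcon K
      rw [W_mroot h3] at this
      linarith [h2 h]
    · linarith [mroot_nonneg h3 K]
  rw [Real.dist_eq, abs_lt]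
  constructor <;> linarith


/-- the candidate profile built from the backward recursion -/
def vp (ρ : ℝ) (K : ℕ) : Fin (K + 1) → ℝ :=
  fun k => W ρ (mroot ρ K) (K - (k : ℕ))

lemma ext_le {K : ℕ} (v : Fin (K+1) → ℝ) {n : ℕ} (hn : n ≤ K) :
    extProfile K v n = v ⟨n, Nat.lt_succ_of_le hn⟩ := by
  rw [extProfile, dif_pos (Nat.lt_succ_of_le hn)]

lemma ext_gt {K : ℕ} (v : Fin (K+1) → ℝ) {n : ℕ} (hn : K < n) :
    extProfile K v n = 0 := by
  rw [extProfile, dif_neg (by omega)]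

lemma ext_vp {ρ : ℝ} {K n : ℕ} (hn : n ≤ K) :
    extProfile K (vp ρ K) n = W ρ (mroot ρ K) (K - n) := by
  rw [ext_le _ hn]; rfl

lemma vp_is {ρ : ℝ} (hρ : 0 < ρ) (K : ℕ) : IsTwoChoiceProfile ρ K (vp ρ K) := by
  have hm := mroot_nonneg hρ K
  have hK0 : extProfile K (vp ρ K) 0 = 1 := by
    rw [ext_vp (Nat.zero_le K), Nat.sub_zero, W_mroot hρ]
  have hKK : extProfile K (vp ρ K) K = mroot ρ K := by
    rw [ext_vp le_rfl, Nat.sub_self]; rfl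
  -- telescoped identity
  have htele : ∀ j, 1 ≤ j → j ≤ K →
      extProfile K (vp ρ K) j = ρ * ((extProfile K (vp ρ K) (j-1)) ^ 2 - (mroot ρ K) ^ 2) := by
    intro j hj1 hjK
    rw [ext_vp hjK, ext_vp (by omega : j - 1 ≤ K),
        show K - (j-1) = (K - j) + 1 by omega]
    exact W_succ_eq hρ hm (K - j)
  refine ⟨hK0, ?_, ?_, ?_⟩
  · intro k hk
    rw [ext_vp (by omega : k + 1 ≤ K), ext_vp (by omega : k ≤ K),
        show K - k = (K - (k+1)) + 1 by omega]
    exact W_le_succ hρ hm _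
  · rw [hKK]; exact hm
  · intro k hk1 hkK
    rcases eq_or_lt_of_le hkK with h | h
    · have h1 := htele k hk1 (le_of_eq h)
      have hzero : extProfile K (vp ρ K) (k+1) = 0 := ext_gt _ (by omega)
      have h2sq : extProfile K (vp ρ K) k ^ 2 = mroot ρ K ^ 2 := by rw [h, hKK]
      linear_combination h1 - hzero + ρ * h2sq
    · have h1 := htele k hk1 hkK
      have h2 := htele (k+1) (by omega) (by omega)
      rw [Nat.add_sub_cancel] at h2
      linear_combination h1 - h2

section profileLemmas
variable {ρ : ℝ} {K : ℕ} {v : Fin (K+1) → ℝ}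

lemma prof_succ_le (h : IsTwoChoiceProfile ρ K v) (n : ℕ) :
    extProfile K v (n+1) ≤ extProfile K v n := by
  rcases lt_trichotomy n K with hn | hn | hn
  · exact h.2.1 n hn
  · rw [hn, ext_gt _ (by omega : K < K + 1)]; exact h.2.2.1
  · rw [ext_gt _ hn, ext_gt _ (by omega)]

lemma prof_anti (h : IsTwoChoiceProfile ρ K v) : Antitone (extProfile K v) :=
  antitone_nat_of_succ_le (prof_succ_le h)

lemma prof_nonneg (h : IsTwoChoiceProfile ρ K v) (n : ℕ) : 0 ≤ extProfile K v n := by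
  rcases le_or_gt n K with hn | hn
  · exact le_trans h.2.2.1 (prof_anti h hn)
  · rw [ext_gt _ hn]

lemma prof_tele (h : IsTwoChoiceProfile ρ K v) :
    ∀ k, 1 ≤ k → k ≤ K + 1 →
      extProfile K v k = ρ * ((extProfile K v (k-1)) ^ 2 - (extProfile K v K) ^ 2) := by
  have aux : ∀ j, j ≤ K →
      extProfile K v (K + 1 - j) =
        ρ * ((extProfile K v (K - j)) ^ 2 - (extProfile K v K) ^ 2) := by
    intro j
    induction j with
    | zero =>
        intro _
        rw [Nat.sub_zero, Nat.sub_zero, ext_gt _ (by omega : K < K + 1)]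
        ring
    | succ j ih =>
        intro hj
        have ihj := ih (by omega)
        have hrec := h.2.2.2 (K - j) (by omega) (by omega)
        rw [show K - j + 1 = K + 1 - j by omega] at hrec
        rw [show K + 1 - (j+1) = K - j by omega, show K - (j+1) = K - j - 1 by omega]
        linear_combination hrec + ihj
  intro k hk1 hk
  have := aux (K + 1 - k) (by omega)
  rw [show K + 1 - (K + 1 - k) = k by omega, show K - (K + 1 - k) = k - 1 by omega] at this
  exact this

end profileLemmas

/-- Core comparison lemma: profiles are pointwise monotone in `ρ`. -/
lemma profile_le {ρ ρ' : ℝ} {K : ℕ} {v w : Fin (K+1) → ℝ}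
    (hρ : 0 < ρ) (hρρ' : ρ ≤ ρ')
    (hv : IsTwoChoiceProfile ρ K v) (hw : IsTwoChoiceProfile ρ' K w) :
    ∀ n, extProfile K v n ≤ extProfile K w n := by
  classical
  by_contra hcon
  push_neg at hcon
  obtain ⟨n₀, hn₀⟩ := hcon
  have hex : ∃ n, extProfile K w n < extProfile K v n := ⟨n₀, hn₀⟩
  have hjlt := Nat.find_spec hex
  have hmin : ∀ i, i < Nat.find hex → extProfile K v i ≤ extProfile K w i :=
    fun i hi => le_of_not_gt (Nat.find_min hex hi)
  set j := Nat.find hex with hjdef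
  have hρ' : 0 < ρ' := lt_of_lt_of_le hρ hρρ'
  have hj1 : 1 ≤ j := by
    rcases Nat.eq_zero_or_pos j with h | h
    · rw [h, hv.1, hw.1] at hjlt; exact absurd hjlt (lt_irrefl 1)
    · exact h
  have hjK : j ≤ K := by
    by_contra h
    push_neg at h
    rw [ext_gt v h] at hjlt
    exact absurd (prof_nonneg hw j) (not_le.mpr hjlt)
  set E := ρ' * extProfile K w K ^ 2 - ρ * extProfile K v K ^ 2 with hE
  have step : ∀ k, k ≤ K → extProfile K w (k+1) - extProfile K v (k+1) =
      (ρ' * extProfile K w k ^ 2 - ρ * extProfile K v k ^ 2) - E := by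
    intro k hk
    have h1 := prof_tele hv (k+1) (by omega) (by omega)
    have h2 := prof_tele hw (k+1) (by omega) (by omega)
    rw [Nat.add_sub_cancel] at h1 h2
    rw [h1, h2, hE]
    ring
  have hkey : (ρ' - ρ) * extProfile K v (j-1) ^ 2 < E := by
    have hs := step (j-1) (by omega)
    rw [show j - 1 + 1 = j by omega] at hs
    have hpq : extProfile K v (j-1) ≤ extProfile K w (j-1) := hmin _ (by omega)
    have hpn : 0 ≤ extProfile K v (j-1) := prof_nonneg hv _
    have hsq : extProfile K v (j-1) ^ 2 ≤ extProfile K w (j-1) ^ 2 :=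
      pow_le_pow_left₀ hpn hpq 2
    have h2 : ρ' * extProfile K v (j-1) ^ 2 ≤ ρ' * extProfile K w (j-1) ^ 2 :=
      mul_le_mul_of_nonneg_left hsq hρ'.le
    linarith
  have hprop : ∀ i, j + i ≤ K + 1 → extProfile K w (j + i) < extProfile K v (j + i) := by
    intro i
    induction i with
    | zero => intro _; simpa using hjlt
    | succ i ih =>
        intro hi
        have hik : j + i ≤ K := by omega
        have hqp := ih (by omega)
        have hs := step (j + i) hik
        have hq0 : 0 ≤ extProfile K w (j + i) := prof_nonneg hw _
        have h1 : ρ' * extProfile K w (j+i) ^ 2 ≤ ρ' * extProfile K v (j+i) ^ 2 :=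
          mul_le_mul_of_nonneg_left (pow_le_pow_left₀ hq0 hqp.le 2) hρ'.le
        have hanti : extProfile K v (j + i) ≤ extProfile K v (j - 1) :=
          prof_anti hv (by omega)
        have hp0 : 0 ≤ extProfile K v (j + i) := prof_nonneg hv _
        have h2 : (ρ' - ρ) * extProfile K v (j+i) ^ 2 ≤ (ρ' - ρ) * extProfile K v (j-1) ^ 2 :=
          mul_le_mul_of_nonneg_left (pow_le_pow_left₀ hp0 hanti 2) (by linarith)
        have hlt : extProfile K w (j + i + 1) - extProfile K v (j + i + 1) < 0 := by
          linarith
        rw [show j + (i+1) = j + i + 1 by omega]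
        linarith
  have hfin := hprop (K + 1 - j) (by omega)
  rw [show j + (K + 1 - j) = K + 1 by omega] at hfin
  rw [ext_gt v (by omega : K < K + 1), ext_gt w (by omega : K < K + 1)] at hfin
  exact absurd hfin (lt_irrefl 0)

lemma profile_unique {ρ : ℝ} {K : ℕ} {v w : Fin (K+1) → ℝ}
    (hρ : 0 < ρ) (hv : IsTwoChoiceProfile ρ K v) (hw : IsTwoChoiceProfile ρ K w) :
    v = w := by
  funext k
  have h1 := profile_le hρ le_rfl hv hw (k : ℕ)
  have h2 := profile_le hρ le_rfl hw hv (k : ℕ)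
  have hk : (k : ℕ) ≤ K := by omega
  rw [ext_le v hk, ext_le w hk] at h1 h2
  simpa using le_antisymm h1 h2

lemma nu_is {ρ : ℝ} (hρ : 0 < ρ) (K : ℕ) : IsTwoChoiceProfile ρ K (nu ρ K) :=
  Classical.epsilon_spec ⟨vp ρ K, vp_is hρ K⟩

lemma eq_nu {ρ : ℝ} {K : ℕ} {v : Fin (K+1) → ℝ} (hρ : 0 < ρ)
    (hv : IsTwoChoiceProfile ρ K v) : v = nu ρ K :=
  profile_unique hρ hv (nu_is hρ K)


/-- mean queue length per cluster at utilization ρ -/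
def S (ρ : ℝ) (K : ℕ) : ℝ := ∑ k ∈ Finset.Icc 1 K, extProfile K (vp ρ K) k

lemma sum_eq_S {ρ : ℝ} {K : ℕ} {v : Fin (K+1) → ℝ} (hρ : 0 < ρ)
    (hv : IsTwoChoiceProfile ρ K v) :
    ∑ k ∈ Finset.Icc 1 K, extProfile K v k = S ρ K := by
  rw [profile_unique hρ hv (vp_is hρ K)]
  rfl

lemma S_nonneg {ρ : ℝ} (hρ : 0 < ρ) (K : ℕ) : 0 ≤ S ρ K :=
  Finset.sum_nonneg fun k _ => prof_nonneg (vp_is hρ K) k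

lemma S_le {ρ : ℝ} (hρ : 0 < ρ) (K : ℕ) : S ρ K ≤ K * ρ := by
  have h1 : extProfile K (vp ρ K) 1 ≤ ρ := by
    have := prof_tele (vp_is hρ K) 1 le_rfl (by omega)
    rw [(vp_is hρ K).1] at this
    nlinarith [sq_nonneg (extProfile K (vp ρ K) K)]
  have hterm : ∀ k ∈ Finset.Icc 1 K, extProfile K (vp ρ K) k ≤ ρ := by
    intro k hk
    rw [Finset.mem_Icc] at hk
    exact le_trans (prof_anti (vp_is hρ K) hk.1) h1
  calc S ρ K ≤ ∑ _k ∈ Finset.Icc 1 K, ρ := Finset.sum_le_sum hterm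
    _ = (K : ℝ) * ρ := by
        rw [Finset.sum_const, Nat.card_Icc]
        simp [nsmul_eq_mul]

lemma S_mono {ρ ρ' : ℝ} (hρ : 0 < ρ) (hρρ' : ρ ≤ ρ') (K : ℕ) : S ρ K ≤ S ρ' K :=
  Finset.sum_le_sum fun k _ =>
    profile_le hρ hρρ' (vp_is hρ K) (vp_is (lt_of_lt_of_le hρ hρρ') K) k

lemma S_continuousAt {ρ₀ : ℝ} (hρ : 0 < ρ₀) (K : ℕ) :
    ContinuousAt (fun ρ => S ρ K) ρ₀ := by
  have hrw : (fun ρ => S ρ K) = fun ρ => ∑ k ∈ Finset.Icc 1 K, W ρ (mroot ρ K) (K - k) := by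
    funext ρ
    exact Finset.sum_congr rfl fun k hk => ext_vp (Finset.mem_Icc.mp hk).2
  rw [hrw]
  have hterm : ∀ k ∈ Finset.Icc 1 K, ContinuousAt (fun ρ => W ρ (mroot ρ K) (K - k)) ρ₀ := by
    intro k _
    have hpair : ContinuousAt (fun ρ : ℝ => ((ρ, mroot ρ K) : ℝ × ℝ)) ρ₀ :=
      continuousAt_id.prodMk (mroot_continuousAt hρ K)
    show ContinuousAt ((fun p : ℝ × ℝ => W p.1 p.2 (K - k)) ∘ fun ρ : ℝ => (ρ, mroot ρ K)) ρ₀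
    exact ContinuousAt.comp (W_continuousAt (ρ₀ := ρ₀) (m₀ := mroot ρ₀ K) hρ.ne' (K - k)) hpair
  exact tendsto_finset_sum _ hterm

/-- Existence and uniqueness of the equilibrium utilization. -/
lemma key {C : ℕ} (α : Fin C → ℝ) (hα : ∀ i, 0 < α i)
    (K : Fin C → ℕ) (r : Fin C → ℝ) (hr0 : ∀ i, 0 < r i) (hr1 : ∀ i, r i ≤ 1)
    (Λ s : ℝ) (hΛ : 0 < Λ) (hs : 0 < s) :
    ∃! ρ : ℝ, 0 < ρ ∧ s = Λ * ρ + ∑ i, α i * S (ρ * r i) (K i) := by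
  set Φ : ℝ → ℝ := fun ρ => Λ * ρ + ∑ i, α i * S (ρ * r i) (K i) with hΦ
  set B : ℝ := ∑ i, α i * (K i : ℝ) with hB
  have hB0 : 0 ≤ B :=
    Finset.sum_nonneg fun i _ => mul_nonneg (hα i).le (Nat.cast_nonneg _)
  set a : ℝ := s / (Λ + B) with ha
  set b : ℝ := s / Λ with hb
  have ha0 : 0 < a := div_pos hs (by linarith)
  have hab : a ≤ b := by
    rw [ha, hb]
    gcongr
    · linarith
  have hcontAt : ∀ x : ℝ, 0 < x → ContinuousAt Φ x := by
    intro x hx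
    apply ContinuousAt.add
    · exact (continuous_const.mul continuous_id).continuousAt
    · apply tendsto_finset_sum
      intro i _
      have hS : ContinuousAt (fun ρ : ℝ => S (ρ * r i) (K i)) x := by
        show ContinuousAt ((fun t => S t (K i)) ∘ fun ρ : ℝ => ρ * r i) x
        exact ContinuousAt.comp (S_continuousAt (mul_pos hx (hr0 i)) (K i))
          ((continuous_id.mul continuous_const).continuousAt)
      exact continuousAt_const.mul hS
  have hΦa : Φ a ≤ s := by
    have hterm : ∀ i : Fin C, α i * S (a * r i) (K i) ≤ α i * ((K i : ℝ) * a) := by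
      intro i
      apply mul_le_mul_of_nonneg_left _ (hα i).le
      calc S (a * r i) (K i) ≤ (K i : ℝ) * (a * r i) := S_le (mul_pos ha0 (hr0 i)) _
        _ ≤ (K i : ℝ) * a := by
            have : a * r i ≤ a := by nlinarith [hr1 i, hr0 i]
            exact mul_le_mul_of_nonneg_left this (Nat.cast_nonneg _)
    have hsum : ∑ i, α i * S (a * r i) (K i) ≤ B * a := by
      calc ∑ i, α i * S (a * r i) (K i) ≤ ∑ i, α i * ((K i : ℝ) * a) :=
            Finset.sum_le_sum fun i _ => hterm i
        _ = B * a := by rw [hB, Finset.sum_mul]; exact Finset.sum_congr rfl fun i _ => by ring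
    have haa : (Λ + B) * a = s := by
      rw [ha]; field_simp
    calc Φ a ≤ Λ * a + B * a := by exact add_le_add le_rfl hsum
      _ = (Λ + B) * a := by ring
      _ = s := haa
  have hΦb : s ≤ Φ b := by
    have hbb : Λ * b = s := by rw [hb]; field_simp
    have : 0 ≤ ∑ i, α i * S (b * r i) (K i) := by
      apply Finset.sum_nonneg
      intro i _
      have hbr : 0 < b * r i := mul_pos (lt_of_lt_of_le ha0 hab) (hr0 i)
      exact mul_nonneg (hα i).le (S_nonneg hbr _)
    rw [hΦ]
    dsimp only
    linarith
  have hΦcont : ContinuousOn Φ (Set.Icc a b) := fun x hx =>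
    (hcontAt x (lt_of_lt_of_le ha0 hx.1)).continuousWithinAt
  obtain ⟨ρ₀, hρ₀mem, hρ₀⟩ := intermediate_value_Icc hab hΦcont ⟨hΦa, hΦb⟩
  have hρ₀pos : 0 < ρ₀ := lt_of_lt_of_le ha0 hρ₀mem.1
  have hstrict : ∀ x y : ℝ, 0 < x → x < y → Φ x < Φ y := by
    intro x y hx hxy
    rw [hΦ]
    dsimp only
    have h1 : Λ * x < Λ * y := by nlinarith
    have h2 : ∑ i, α i * S (x * r i) (K i) ≤ ∑ i, α i * S (y * r i) (K i) := by
      apply Finset.sum_le_sum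
      intro i _
      apply mul_le_mul_of_nonneg_left _ (hα i).le
      exact S_mono (mul_pos hx (hr0 i)) (by nlinarith [hr0 i]) (K i)
    linarith
  refine ⟨ρ₀, ⟨hρ₀pos, hρ₀.symm⟩, ?_⟩
  intro ρ' ⟨hρ'pos, hρ'⟩
  have hΦρ' : Φ ρ' = s := hρ'.symm
  rcases lt_trichotomy ρ' ρ₀ with h | h | h
  · exact absurd (hstrict ρ' ρ₀ hρ'pos h) (by rw [hΦρ', hρ₀]; exact lt_irrefl s)
  · exact h
  · exact absurd (hstrict ρ₀ ρ' hρ₀pos h) (by rw [hΦρ', hρ₀]; exact lt_irrefl s)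

end TCPaux

/-- unique equilibrium point of the clustered two-choice mean-field model:
a unique pair `(ρ, u)` with `ρ > 0`, each `u_i` a two-choice profile for `(ρ r_i, K_i)`, and
`s = Λρ + Σ_c α_c Σ_{k=1}^{K_c} u_{c,k}`; moreover `u_{i,k} = ν_{ρ r_i, K_i}(k)`. -/
theorem cluster_equilibrium_exists_unique (C : ℕ) (hC : 1 ≤ C)
    (α : Fin C → ℝ) (hα : ∀ i, 0 < α i) (hαsum : ∑ i, α i = 1)
    (K : Fin C → ℕ) (hK : ∀ i, 1 ≤ K i)
    (r : Fin C → ℝ) (hr0 : ∀ i, 0 < r i) (hr1 : ∀ i, r i ≤ 1) (hrmax : ∃ i, r i = 1)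
    (Λ s : ℝ) (hΛ : 0 < Λ) (hs : 0 < s) :
    (∃! p : ℝ × (∀ i : Fin C, Fin (K i + 1) → ℝ),
      0 < p.1 ∧ (∀ i, IsTwoChoiceProfile (p.1 * r i) (K i) (p.2 i)) ∧
      s = Λ * p.1 + ∑ i, α i * ∑ k ∈ Finset.Icc 1 (K i), extProfile (K i) (p.2 i) k) ∧
    ∀ (ρ : ℝ) (u : ∀ i : Fin C, Fin (K i + 1) → ℝ),
      0 < ρ → (∀ i, IsTwoChoiceProfile (ρ * r i) (K i) (u i)) →
      s = Λ * ρ + ∑ i, α i * ∑ k ∈ Finset.Icc 1 (K i), extProfile (K i) (u i) k →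
      ∀ i k, u i k = nu (ρ * r i) (K i) k := by
  classical
  obtain ⟨ρ₀, ⟨hρ₀pos, hρ₀eq⟩, hρ₀uniq⟩ := TCPaux.key α hα K r hr0 hr1 Λ s hΛ hs
  have hsum : ∀ (ρ : ℝ), 0 < ρ → ∀ (u : ∀ i : Fin C, Fin (K i + 1) → ℝ),
      (∀ i, IsTwoChoiceProfile (ρ * r i) (K i) (u i)) →
      ∑ i, α i * ∑ k ∈ Finset.Icc 1 (K i), extProfile (K i) (u i) k
        = ∑ i, α i * TCPaux.S (ρ * r i) (K i) := by
    intro ρ hρ u hu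
    refine Finset.sum_congr rfl fun i _ => ?_
    rw [TCPaux.sum_eq_S (mul_pos hρ (hr0 i)) (hu i)]
  constructor
  · refine ⟨(ρ₀, fun i => TCPaux.vp (ρ₀ * r i) (K i)), ⟨hρ₀pos, ?_, ?_⟩, ?_⟩
    · exact fun i => TCPaux.vp_is (mul_pos hρ₀pos (hr0 i)) (K i)
    · rw [hsum ρ₀ hρ₀pos _ (fun i => TCPaux.vp_is (mul_pos hρ₀pos (hr0 i)) (K i))]
      exact hρ₀eq
    · rintro ⟨ρ', u'⟩ ⟨hρ'pos, hu', heq⟩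
      have hρ'eq : s = Λ * ρ' + ∑ i, α i * TCPaux.S (ρ' * r i) (K i) := by
        rw [← hsum ρ' hρ'pos u' hu']; exact heq
      have hρρ : ρ' = ρ₀ := hρ₀uniq ρ' ⟨hρ'pos, hρ'eq⟩
      subst hρρ
      simp only [Prod.mk.injEq]
      refine ⟨by trivial, ?_⟩
      funext i
      exact TCPaux.profile_unique (mul_pos hρ'pos (hr0 i)) (hu' i)
        (TCPaux.vp_is (mul_pos hρ'pos (hr0 i)) (K i))
  · intro ρ u hρpos hu _ i k
    exact congrFun (TCPaux.eq_nu (mul_pos hρpos (hr0 i)) (hu i)) k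
end
end

section
/- Let C ≥ 1 be an integer, let α_1, …, α_C > 0 with α_1 + … + α_C = 1, let K_1, …, K_C ≥ 1 be integers, let r_1, …, r_C ∈ (0, 1] with max_i r_i = 1, let β_1, …, β_C ∈ [0, 1], let Λ > 0 and s > 0. Then there exists a unique pair (ρ, u) with ρ > 0 and u = (u_{i,k})_{1 ≤ i ≤ C, 0 ≤ k ≤ K_i} such that: for each i, 1 = u_{i,0} ≥ u_{i,1} ≥ … ≥ u_{i,K_i} ≥ 0 and, with the convention u_{i,K_i+1} = 0, u_{i,k} − u_{i,k+1} = ρ r_i (β_i(u_{i,k−1}² − u_{i,k}²) + (1 − β_i)(u_{i,k−1} − u_{i,k})) for every 1 ≤ k ≤ K_i, and s = Λρ + Σ_{c=1}^{C} α_c Σ_{k=1}^{K_c} u_{c,k}. -/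
open Finset Real
noncomputable section

/-- `v` is an incentive profile for `(ρ, β, K)`. -/
def IsIncentiveProfile (ρ β : ℝ) (K : ℕ) (v : Fin (K + 1) → ℝ) : Prop :=
  extProfile K v 0 = 1 ∧
  (∀ k < K, extProfile K v (k + 1) ≤ extProfile K v k) ∧
  0 ≤ extProfile K v K ∧
  ∀ k, 1 ≤ k → k ≤ K →
    extProfile K v k - extProfile K v (k + 1) =
      ρ * (β * ((extProfile K v (k - 1)) ^ 2 - (extProfile K v k) ^ 2) +
        (1 - β) * (extProfile K v (k - 1) - extProfile K v k))

/-- `Q β x = β x² + (1-β) x`. -/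
def Qf (β x : ℝ) : ℝ := β * x ^ 2 + (1 - β) * x

/-- Explicit inverse of `Qf β` on nonnegative reals (junk-extended). -/
def Qinv (β y : ℝ) : ℝ :=
  2 * max y 0 / ((1 - β) + Real.sqrt ((1 - β) ^ 2 + 4 * β * max y 0))

lemma Qf_one (β : ℝ) : Qf β 1 = 1 := by simp [Qf]

lemma Qf_zero (β : ℝ) : Qf β 0 = 0 := by simp [Qf]

lemma Qf_strictMonoOn {β : ℝ} (hβ0 : 0 ≤ β) (hβ1 : β ≤ 1) :
    StrictMonoOn (Qf β) (Set.Ici 0) := by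
  intro x hx y hy hxy
  simp only [Set.mem_Ici] at hx hy
  simp only [Qf]
  have hy' : 0 < y := lt_of_le_of_lt hx hxy
  have key : 0 < β * y + (1 - β) := by
    rcases le_or_gt 1 y with h | h
    · nlinarith [mul_nonneg hβ0 (sub_nonneg.2 h)]
    · have h2 : β * (1 - y) ≤ 1 - y := mul_le_of_le_one_left (sub_pos.2 h).le hβ1
      nlinarith
  nlinarith [mul_pos (sub_pos.2 hxy) key, mul_nonneg (sub_pos.2 hxy).le (mul_nonneg hβ0 hx)]

lemma Qf_monotoneOn {β : ℝ} (hβ0 : 0 ≤ β) (hβ1 : β ≤ 1) :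
    MonotoneOn (Qf β) (Set.Ici 0) := (Qf_strictMonoOn hβ0 hβ1).monotoneOn

lemma Qf_nonneg {β x : ℝ} (hβ0 : 0 ≤ β) (hβ1 : β ≤ 1) (hx : 0 ≤ x) : 0 ≤ Qf β x := by
  simp only [Qf]; nlinarith

lemma Qinv_nonneg {β : ℝ} (hβ1 : β ≤ 1) (y : ℝ) : 0 ≤ Qinv β y := by
  apply div_nonneg
  · have := le_max_right y 0
    linarith
  · exact add_nonneg (by linarith) (Real.sqrt_nonneg _)

lemma Qinv_zero (β : ℝ) : Qinv β 0 = 0 := by simp [Qinv]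

lemma Qf_Qinv {β : ℝ} (hβ0 : 0 ≤ β) (hβ1 : β ≤ 1) {y : ℝ} (hy : 0 ≤ y) :
    Qf β (Qinv β y) = y := by
  have hm : max y 0 = y := max_eq_left hy
  rw [Qinv, hm]
  have hrad : (0:ℝ) ≤ (1 - β) ^ 2 + 4 * β * y := by nlinarith
  have hs2 : Real.sqrt ((1 - β) ^ 2 + 4 * β * y) ^ 2 = (1 - β) ^ 2 + 4 * β * y :=
    Real.sq_sqrt hrad
  set s := Real.sqrt ((1 - β) ^ 2 + 4 * β * y) with hsdef
  have hsnn : 0 ≤ s := Real.sqrt_nonneg _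
  have hDnn : 0 ≤ 1 - β + s := by linarith
  rcases eq_or_lt_of_le hDnn with hD0 | hDpos
  · have h1 : 1 - β = 0 := by linarith
    have hy0 : y = 0 := by nlinarith
    simp [Qf, hy0]
  · rw [Qf]
    field_simp
    linear_combination (-y) * hs2

lemma Qinv_Qf {β : ℝ} (hβ0 : 0 ≤ β) (hβ1 : β ≤ 1) {x : ℝ} (hx : 0 ≤ x) :
    Qinv β (Qf β x) = x := by
  have h1 : Qf β (Qinv β (Qf β x)) = Qf β x :=
    Qf_Qinv hβ0 hβ1 (Qf_nonneg hβ0 hβ1 hx)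
  exact (Qf_strictMonoOn hβ0 hβ1).injOn (Qinv_nonneg hβ1 _) hx h1

lemma Qinv_strictMonoOn {β : ℝ} (hβ0 : 0 ≤ β) (hβ1 : β ≤ 1) :
    StrictMonoOn (Qinv β) (Set.Ici 0) := by
  intro x hx y hy hxy
  by_contra h
  push_neg at h
  have h2 : Qf β (Qinv β y) ≤ Qf β (Qinv β x) :=
    Qf_monotoneOn hβ0 hβ1 (Qinv_nonneg hβ1 y) (Qinv_nonneg hβ1 x) h
  rw [Qf_Qinv hβ0 hβ1 hx, Qf_Qinv hβ0 hβ1 hy] at h2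
  exact absurd hxy (not_lt.2 h2)

lemma Qinv_monotoneOn {β : ℝ} (hβ0 : 0 ≤ β) (hβ1 : β ≤ 1) :
    MonotoneOn (Qinv β) (Set.Ici 0) := (Qinv_strictMonoOn hβ0 hβ1).monotoneOn

lemma Qinv_one {β : ℝ} (hβ0 : 0 ≤ β) (hβ1 : β ≤ 1) : Qinv β 1 = 1 := by
  have := Qinv_Qf hβ0 hβ1 (zero_le_one (α := ℝ))
  rwa [Qf_one] at this

lemma Qinv_continuous {β : ℝ} (hβ0 : 0 ≤ β) (hβ1 : β ≤ 1) :
    Continuous (Qinv β) := by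
  rcases eq_or_lt_of_le hβ1 with hb1 | hb1
  · -- β = 1 : Qinv β y = sqrt (max y 0)
    subst hb1
    have hfun : Qinv 1 = fun y => Real.sqrt (max y 0) := by
      funext y
      have hm : (0:ℝ) ≤ max y 0 := le_max_right y 0
      rw [Qinv]
      rw [show (1:ℝ) - 1 = 0 by norm_num, zero_add]
      rw [show (0:ℝ) ^ 2 + 4 * 1 * max y 0 = 2 ^ 2 * max y 0 by ring]
      rw [Real.sqrt_mul (by positivity) (max y 0),
        Real.sqrt_sq (by norm_num : (0:ℝ) ≤ 2)]
      rw [mul_div_mul_left _ _ (two_ne_zero)]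
      exact Real.div_sqrt
    rw [hfun]
    exact Real.continuous_sqrt.comp (continuous_id.max continuous_const)
  · -- β < 1 : denominator bounded below by 1 - β > 0
    apply Continuous.div
    · exact continuous_const.mul (continuous_id.max continuous_const)
    · apply continuous_const.add
      apply Real.continuous_sqrt.comp
      exact continuous_const.add (continuous_const.mul (continuous_id.max continuous_const))
    · intro y
      have : 0 ≤ Real.sqrt ((1 - β) ^ 2 + 4 * β * max y 0) := Real.sqrt_nonneg _
      intro h
      nlinarith

/-- Backward recursion: `Wrec β a c m` is `u_{K-m}` for the incentive profile. -/
def Wrec (β a c : ℝ) : ℕ → ℝ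
  | 0 => Qinv β (c / a)
  | n + 1 => Qinv β ((Wrec β a c n + c) / a)

lemma Wrec_nonneg {β : ℝ} (hβ1 : β ≤ 1) (a c : ℝ) (n : ℕ) : 0 ≤ Wrec β a c n := by
  cases n <;> exact Qinv_nonneg hβ1 _

lemma Wrec_zero_c {β : ℝ} (a : ℝ) (n : ℕ) : Wrec β a 0 n = 0 := by
  induction n with
  | zero => simp [Wrec, Qinv_zero]
  | succ n ih => simp [Wrec, ih, Qinv_zero]

section Wlemmas

variable {β a c : ℝ}

lemma Wrec_mono_n (hβ0 : 0 ≤ β) (hβ1 : β ≤ 1) (ha : 0 < a) (hc : 0 ≤ c) :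
    Monotone (Wrec β a c) := by
  have h0 : ∀ m, 0 ≤ Wrec β a c m := Wrec_nonneg hβ1 a c
  apply monotone_nat_of_le_succ
  intro n
  induction n with
  | zero =>
    show Qinv β (c / a) ≤ Qinv β ((Wrec β a c 0 + c) / a)
    apply Qinv_monotoneOn hβ0 hβ1 (Set.mem_Ici.2 (by positivity))
      (Set.mem_Ici.2 (div_nonneg (by linarith [h0 0]) ha.le))
    gcongr
    linarith [h0 0]
  | succ n ih =>
    show Qinv β ((Wrec β a c n + c) / a) ≤ Qinv β ((Wrec β a c (n+1) + c) / a)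
    apply Qinv_monotoneOn hβ0 hβ1
      (Set.mem_Ici.2 (div_nonneg (by linarith [h0 n]) ha.le))
      (Set.mem_Ici.2 (div_nonneg (by linarith [h0 (n+1)]) ha.le))
    gcongr

lemma Qf_Wrec_zero (hβ0 : 0 ≤ β) (hβ1 : β ≤ 1) (ha : 0 < a) (hc : 0 ≤ c) :
    Qf β (Wrec β a c 0) = c / a :=
  Qf_Qinv hβ0 hβ1 (div_nonneg hc ha.le)

lemma Qf_Wrec_succ (hβ0 : 0 ≤ β) (hβ1 : β ≤ 1) (ha : 0 < a) (hc : 0 ≤ c) (n : ℕ) :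
    Qf β (Wrec β a c (n + 1)) = (Wrec β a c n + c) / a :=
  Qf_Qinv hβ0 hβ1 (div_nonneg (by linarith [Wrec_nonneg hβ1 a c n]) ha.le)

lemma Wrec_strictMono_c (hβ0 : 0 ≤ β) (hβ1 : β ≤ 1) (ha : 0 < a) {c' : ℝ}
    (hc : 0 ≤ c) (hcc : c < c') (n : ℕ) : Wrec β a c n < Wrec β a c' n := by
  have hc' : 0 ≤ c' := by linarith
  induction n with
  | zero =>
    apply Qinv_strictMonoOn hβ0 hβ1 (Set.mem_Ici.2 (div_nonneg hc ha.le))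
      (Set.mem_Ici.2 (div_nonneg hc' ha.le))
    gcongr
  | succ n ih =>
    show Qinv β ((Wrec β a c n + c) / a) < Qinv β ((Wrec β a c' n + c') / a)
    have h0 : 0 ≤ Wrec β a c n := Wrec_nonneg hβ1 a c n
    have h0' : 0 ≤ Wrec β a c' n := Wrec_nonneg hβ1 a c' n
    apply Qinv_strictMonoOn hβ0 hβ1
      (Set.mem_Ici.2 (div_nonneg (by linarith) ha.le))
      (Set.mem_Ici.2 (div_nonneg (by linarith) ha.le))
    gcongr

lemma Wrec_continuousOn (hβ0 : 0 ≤ β) (hβ1 : β ≤ 1) (n : ℕ) :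
    ContinuousOn (fun p : ℝ × ℝ => Wrec β p.1 p.2 n) {p : ℝ × ℝ | p.1 ≠ 0} := by
  induction n with
  | zero =>
    show ContinuousOn (fun p : ℝ × ℝ => Qinv β (p.2 / p.1)) _
    exact (Qinv_continuous hβ0 hβ1).comp_continuousOn
      (continuous_snd.continuousOn.div continuous_fst.continuousOn (fun p hp => hp))
  | succ n ih =>
    show ContinuousOn (fun p : ℝ × ℝ => Qinv β ((Wrec β p.1 p.2 n + p.2) / p.1)) _
    exact (Qinv_continuous hβ0 hβ1).comp_continuousOn
      ((ih.add continuous_snd.continuousOn).div continuous_fst.continuousOn (fun p hp => hp))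

end Wlemmas

open Classical in
/-- The unique `c` with `Wrec β a c K = 1`. -/
def cstar (β : ℝ) (K : ℕ) (a : ℝ) : ℝ :=
  if h : ∃ c, 0 ≤ c ∧ c ≤ a ∧ Wrec β a c K = 1 then h.choose else 0

section Cstar

variable {β : ℝ} {K : ℕ} {a : ℝ}

lemma Wrec_one_le (hβ0 : 0 ≤ β) (hβ1 : β ≤ 1) (ha : 0 < a) (n : ℕ) :
    1 ≤ Wrec β a a n := by
  have h0 : Wrec β a a 0 = 1 := by
    show Qinv β (a / a) = 1
    rw [div_self ha.ne', Qinv_one hβ0 hβ1]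
  calc (1:ℝ) = Wrec β a a 0 := h0.symm
  _ ≤ Wrec β a a n := Wrec_mono_n hβ0 hβ1 ha ha.le (Nat.zero_le n)

lemma Wrec_contOn_c (hβ0 : 0 ≤ β) (hβ1 : β ≤ 1) (ha : 0 < a) (n : ℕ) :
    Continuous (fun c => Wrec β a c n) := by
  rw [← continuousOn_univ]
  exact (Wrec_continuousOn hβ0 hβ1 n).comp
    ((continuous_const.prodMk continuous_id).continuousOn)
    (fun c _ => ha.ne')

lemma cstar_exists (hβ0 : 0 ≤ β) (hβ1 : β ≤ 1) (ha : 0 < a) :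
    ∃ c, 0 ≤ c ∧ c ≤ a ∧ Wrec β a c K = 1 := by
  have hcont : ContinuousOn (fun c => Wrec β a c K) (Set.Icc 0 a) :=
    (Wrec_contOn_c hβ0 hβ1 ha K).continuousOn
  have hIVT := intermediate_value_Icc ha.le hcont
  have h1 : (1:ℝ) ∈ Set.Icc (Wrec β a 0 K) (Wrec β a a K) := by
    constructor
    · rw [Wrec_zero_c]; exact zero_le_one
    · exact Wrec_one_le hβ0 hβ1 ha K
  obtain ⟨c, hc, hceq⟩ := hIVT h1
  exact ⟨c, hc.1, hc.2, hceq⟩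

lemma cstar_spec (hβ0 : 0 ≤ β) (hβ1 : β ≤ 1) (ha : 0 < a) :
    0 ≤ cstar β K a ∧ cstar β K a ≤ a ∧ Wrec β a (cstar β K a) K = 1 := by
  rw [cstar]
  rw [dif_pos (cstar_exists hβ0 hβ1 ha)]
  exact (cstar_exists hβ0 hβ1 ha).choose_spec

lemma cstar_unique (hβ0 : 0 ≤ β) (hβ1 : β ≤ 1) (ha : 0 < a) {c : ℝ}
    (hc : 0 ≤ c) (heq : Wrec β a c K = 1) : c = cstar β K a := by
  obtain ⟨h1, _, h3⟩ := cstar_spec (K := K) hβ0 hβ1 ha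
  rcases lt_trichotomy c (cstar β K a) with h | h | h
  · have := Wrec_strictMono_c hβ0 hβ1 ha hc h K
    rw [heq, h3] at this; exact absurd this (lt_irrefl 1)
  · exact h
  · have := Wrec_strictMono_c hβ0 hβ1 ha h1 h K
    rw [heq, h3] at this; exact absurd this (lt_irrefl 1)

lemma cstar_pos (hβ0 : 0 ≤ β) (hβ1 : β ≤ 1) (ha : 0 < a) (hK : 1 ≤ K) :
    0 < cstar β K a := by
  obtain ⟨h1, _, h3⟩ := cstar_spec (K := K) hβ0 hβ1 ha
  rcases eq_or_lt_of_le h1 with h | h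
  · exfalso
    rw [← h, Wrec_zero_c] at h3
    exact zero_ne_one h3
  · exact h

end Cstar

/-- The equilibrium profile for load `a`, as a function `ℕ → ℝ` (value `u_k` at `k ≤ K`). -/
def Ufun (β : ℝ) (K : ℕ) (a : ℝ) : ℕ → ℝ := fun k => Wrec β a (cstar β K a) (K - k)

/-- The equilibrium profile as a vector. -/
def Uprof (β : ℝ) (K : ℕ) (a : ℝ) : Fin (K + 1) → ℝ := fun k => Ufun β K a k.1

section Profile

variable {β : ℝ} {K : ℕ} {a : ℝ}

lemma extProfile_eq (v : Fin (K+1) → ℝ) {k : ℕ} (hk : k ≤ K) :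
    extProfile K v k = v ⟨k, Nat.lt_succ_of_le hk⟩ := by
  rw [extProfile, dif_pos (Nat.lt_succ_of_le hk)]

lemma extProfile_top (v : Fin (K+1) → ℝ) : extProfile K v (K + 1) = 0 := by
  rw [extProfile, dif_neg (lt_irrefl (K+1))]

lemma extProfile_Uprof {k : ℕ} (hk : k ≤ K) :
    extProfile K (Uprof β K a) k = Ufun β K a k := by
  rw [extProfile_eq _ hk]; rfl

lemma Ufun_nonneg (hβ1 : β ≤ 1) (k : ℕ) : 0 ≤ Ufun β K a k :=
  Wrec_nonneg hβ1 _ _ _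

lemma Ufun_anti (hβ0 : 0 ≤ β) (hβ1 : β ≤ 1) (ha : 0 < a) {k l : ℕ} (hkl : k ≤ l) :
    Ufun β K a l ≤ Ufun β K a k :=
  Wrec_mono_n hβ0 hβ1 ha (cstar_spec hβ0 hβ1 ha).1 (Nat.sub_le_sub_left hkl K)

lemma Ufun_zero (hβ0 : 0 ≤ β) (hβ1 : β ≤ 1) (ha : 0 < a) : Ufun β K a 0 = 1 := by
  rw [Ufun, Nat.sub_zero]
  exact (cstar_spec hβ0 hβ1 ha).2.2

lemma Ufun_le_one (hβ0 : 0 ≤ β) (hβ1 : β ≤ 1) (ha : 0 < a) (k : ℕ) :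
    Ufun β K a k ≤ 1 := by
  rw [← Ufun_zero hβ0 hβ1 ha (K := K)]
  exact Ufun_anti hβ0 hβ1 ha (Nat.zero_le k)

/-- Key relation: `Qf β u_{k-1} = u_k / a + Qf β u_K` for `1 ≤ k ≤ K`. -/
lemma Ufun_rel (hβ0 : 0 ≤ β) (hβ1 : β ≤ 1) (ha : 0 < a) {k : ℕ} (hk1 : 1 ≤ k)
    (hkK : k ≤ K) :
    Qf β (Ufun β K a (k - 1)) = Ufun β K a k / a + Qf β (Ufun β K a K) := by
  have hc := cstar_spec (K := K) hβ0 hβ1 ha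
  have hQK : Qf β (Ufun β K a K) = cstar β K a / a := by
    rw [Ufun, Nat.sub_self]
    exact Qf_Wrec_zero hβ0 hβ1 ha hc.1
  have hidx : K - (k - 1) = (K - k) + 1 := by omega
  rw [hQK, Ufun, Ufun, hidx, Qf_Wrec_succ hβ0 hβ1 ha hc.1]
  ring

lemma Ufun_isProfile (hβ0 : 0 ≤ β) (hβ1 : β ≤ 1) (ha : 0 < a) :
    IsIncentiveProfile a β K (Uprof β K a) := by
  have hc := cstar_spec (K := K) hβ0 hβ1 ha
  refine ⟨?_, ?_, ?_, ?_⟩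
  · rw [extProfile_Uprof (Nat.zero_le K)]
    exact Ufun_zero hβ0 hβ1 ha
  · intro k hk
    rw [extProfile_Uprof (by omega), extProfile_Uprof (by omega)]
    exact Ufun_anti hβ0 hβ1 ha (Nat.le_succ k)
  · rw [extProfile_Uprof le_rfl]
    exact Ufun_nonneg hβ1 K
  · intro k hk1 hkK
    have hrel := Ufun_rel hβ0 hβ1 ha hk1 hkK
    have hrw : ∀ {m : ℕ}, m ≤ K →
        extProfile K (Uprof β K a) m = Ufun β K a m := fun hm => extProfile_Uprof hm
    rcases eq_or_lt_of_le hkK with hkK' | hkK'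
    · -- k = K
      subst hkK'
      rw [extProfile_top, hrw le_rfl, hrw (Nat.sub_le k 1), sub_zero]
      have h2 : a * (Qf β (Ufun β k a (k-1)) - Qf β (Ufun β k a k)) = Ufun β k a k := by
        rw [hrel, show Ufun β k a k / a + Qf β (Ufun β k a k) - Qf β (Ufun β k a k) =
          Ufun β k a k / a by ring]
        exact mul_div_cancel₀ _ ha.ne'
      have h3 : a * (β * ((Ufun β k a (k-1))^2 - (Ufun β k a k)^2) +
          (1 - β) * (Ufun β k a (k-1) - Ufun β k a k)) =
          a * (Qf β (Ufun β k a (k-1)) - Qf β (Ufun β k a k)) := by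
        rw [Qf, Qf]; ring
      rw [h3, h2]
    · -- k < K
      rw [hrw hkK, hrw (by omega : k + 1 ≤ K), hrw (by omega : k - 1 ≤ K)]
      have hrel2 := Ufun_rel hβ0 hβ1 ha (by omega : 1 ≤ k + 1) hkK'
      rw [show k + 1 - 1 = k from rfl] at hrel2
      have h2 : a * (Qf β (Ufun β K a (k-1)) - Qf β (Ufun β K a k)) =
          Ufun β K a k - Ufun β K a (k+1) := by
        rw [hrel, hrel2]
        rw [show Ufun β K a k / a + Qf β (Ufun β K a K) -
          (Ufun β K a (k+1) / a + Qf β (Ufun β K a K)) = Ufun β K a k / a -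
          Ufun β K a (k+1) / a by ring]
        rw [mul_sub, mul_div_cancel₀ _ ha.ne', mul_div_cancel₀ _ ha.ne']
      have h3 : a * (β * ((Ufun β K a (k-1))^2 - (Ufun β K a k)^2) +
          (1 - β) * (Ufun β K a (k-1) - Ufun β K a k)) =
          a * (Qf β (Ufun β K a (k-1)) - Qf β (Ufun β K a k)) := by
        rw [Qf, Qf]; ring
      rw [h3, h2]

end Profile

lemma Qf_diff_helper (a β x y : ℝ) :
    a * (β * (x^2 - y^2) + (1-β)*(x-y)) = a * (Qf β x - Qf β y) := by
  rw [Qf, Qf]; ring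

lemma profile_unique {β : ℝ} {K : ℕ} {a : ℝ} (hβ0 : 0 ≤ β) (hβ1 : β ≤ 1)
    (ha : 0 < a) {v : Fin (K+1) → ℝ} (hv : IsIncentiveProfile a β K v) :
    v = Uprof β K a := by
  obtain ⟨h0, hmono, hKnn, hrec⟩ := hv
  set e := extProfile K v with he
  -- antitone
  have hanti : ∀ d k, k + d ≤ K → e (k + d) ≤ e k := by
    intro d
    induction d with
    | zero => intro k _; exact le_rfl
    | succ d ih =>
      intro k hk
      calc e (k + (d+1)) ≤ e (k + d) := hmono (k + d) (by omega)
        _ ≤ e k := ih k (by omega)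
  have hnn : ∀ k, k ≤ K → 0 ≤ e k := by
    intro k hk
    have := hanti (K - k) k (by omega)
    rw [show k + (K - k) = K by omega] at this
    linarith [hKnn]
  -- telescoped relation
  have key : ∀ d k, k + d = K → 1 ≤ k → e k = a * (Qf β (e (k-1)) - Qf β (e K)) := by
    intro d
    induction d with
    | zero =>
      intro k hk h1
      have hkK : k = K := by omega
      subst hkK
      have h := hrec k h1 le_rfl
      have htop : e (k + 1) = 0 := extProfile_top v
      rw [htop, Qf_diff_helper, sub_zero] at h
      exact h
    | succ d ih =>
      intro k hk h1
      have h := hrec k h1 (by omega)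
      rw [Qf_diff_helper] at h
      have h2 := ih (k+1) (by omega) (by omega)
      rw [show k + 1 - 1 = k from rfl] at h2
      ring_nf at h h2 ⊢
      linarith
  -- identification with the recursion
  set c := a * Qf β (e K) with hcdef
  have hc0 : 0 ≤ c := mul_nonneg ha.le (Qf_nonneg hβ0 hβ1 (hnn K le_rfl))
  have key2 : ∀ m, m ≤ K → e (K - m) = Wrec β a c m := by
    intro m
    induction m with
    | zero =>
      intro _
      show e K = Qinv β (c / a)
      rw [hcdef, mul_div_cancel_left₀ _ ha.ne', Qinv_Qf hβ0 hβ1 (hnn K le_rfl)]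
    | succ m ih =>
      intro hm
      have hm' : m ≤ K := by omega
      set k := K - (m + 1) with hkdef
      have hk1 : k + 1 = K - m := by omega
      have hkey := key (K - (k+1)) (k+1) (by omega) (by omega)
      rw [show k + 1 - 1 = k from rfl] at hkey
      have hQ : Qf β (e k) = (e (k+1) + c) / a := by
        rw [hcdef]
        field_simp at hkey ⊢
        linarith [hkey]
      show e k = Qinv β ((Wrec β a c m + c) / a)
      rw [← ih hm', ← hk1, ← hQ, Qinv_Qf hβ0 hβ1 (hnn k (by omega))]
  -- conclude c = cstar
  have hT : Wrec β a c K = 1 := by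
    rw [← key2 K le_rfl, Nat.sub_self]
    exact h0
  have hcc : c = cstar β K a := cstar_unique hβ0 hβ1 ha hc0 hT
  funext k
  have hk : (k : ℕ) ≤ K := by omega
  have h1 : v k = e k.1 := by
    rw [he, extProfile_eq v hk]
  rw [h1]
  have h2 := key2 (K - k.1) (by omega)
  rw [show K - (K - k.1) = k.1 by omega] at h2
  rw [h2, hcc]
  rfl

lemma Qinv_pos {β : ℝ} (hβ0 : 0 ≤ β) (hβ1 : β ≤ 1) {y : ℝ} (hy : 0 < y) :
    0 < Qinv β y := by
  have := Qinv_strictMonoOn hβ0 hβ1 (Set.self_mem_Ici) (Set.mem_Ici.2 hy.le) hy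
  rwa [Qinv_zero] at this

lemma Ufun_K_pos {β : ℝ} {K : ℕ} {a : ℝ} (hβ0 : 0 ≤ β) (hβ1 : β ≤ 1)
    (ha : 0 < a) (hK : 1 ≤ K) : 0 < Ufun β K a K := by
  rw [Ufun, Nat.sub_self]
  exact Qinv_pos hβ0 hβ1 (div_pos (cstar_pos hβ0 hβ1 ha hK) ha)

lemma step_up {a a' X X' Y Y' u1 u1' : ℝ} (ha : 0 < a) (haa : a < a')
    (e1 : X = u1 / a + Y) (e1' : X' = u1' / a' + Y') (hX : X ≤ X')
    (hδ : (Y' - Y) * (a * a') ≤ u1 * (a' - a)) : u1 ≤ u1' := by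
  have ha' : 0 < a' := lt_trans ha haa
  have h1 : u1 = a * (X - Y) := by rw [e1]; field_simp; ring
  have h1' : u1' = a' * (X' - Y') := by rw [e1']; field_simp; ring
  rw [h1] at hδ ⊢
  rw [h1']
  nlinarith [mul_le_mul_of_nonneg_left hX ha'.le, mul_pos ha ha']

lemma step_down {a a' X X' Y Y' u1 u1' : ℝ} (ha : 0 < a) (haa : a < a')
    (e1 : X = u1 / a + Y) (e1' : X' = u1' / a' + Y') (hu : u1 ≤ u1')
    (hδ : u1 * (a' - a) ≤ (Y' - Y) * (a * a')) : X ≤ X' := by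
  have ha' : 0 < a' := lt_trans ha haa
  rw [e1, e1']
  rw [div_add' _ _ _ ha.ne', div_add' _ _ _ ha'.ne']
  rw [div_le_div_iff₀ ha ha']
  nlinarith [mul_le_mul_of_nonneg_left hu ha.le]

/-- `u_K` is strictly increasing in the load. -/
lemma Ufun_K_strict {β : ℝ} {K : ℕ} {a a' : ℝ} (hβ0 : 0 ≤ β) (hβ1 : β ≤ 1)
    (hK : 1 ≤ K) (ha : 0 < a) (haa : a < a') :
    Ufun β K a K < Ufun β K a' K := by
  have ha' : 0 < a' := lt_trans ha haa
  by_contra hle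
  push_neg at hle  -- u' K ≤ u K
  -- show u' (K - d) ≤ u (K - d) with strictness for d ≥ 1
  have main : ∀ d, d ≤ K →
      Ufun β K a' (K - d) ≤ Ufun β K a (K - d) ∧
      (1 ≤ d → Ufun β K a' (K - d) < Ufun β K a (K - d)) := by
    intro d
    induction d with
    | zero => intro _; exact ⟨by rw [Nat.sub_zero]; exact hle, by omega⟩
    | succ d ih =>
      intro hd
      obtain ⟨ihle, _⟩ := ih (by omega)
      set k := K - (d + 1) with hkdef
      have hk1 : k + 1 = K - d := by omega
      have hrel := Ufun_rel hβ0 hβ1 ha (by omega : 1 ≤ k+1) (by omega : k+1 ≤ K)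
      have hrel' := Ufun_rel hβ0 hβ1 ha' (by omega : 1 ≤ k+1) (by omega : k+1 ≤ K)
      rw [show k + 1 - 1 = k from rfl] at hrel hrel'
      rw [hk1] at hrel hrel'
      have hpos : 0 < Ufun β K a (K - d) := by
        have h1 := Ufun_anti (K := K) hβ0 hβ1 ha (show K - d ≤ K by omega)
        have h2 := Ufun_K_pos hβ0 hβ1 ha hK
        linarith
      have hnn' : 0 ≤ Ufun β K a' (K - d) := Ufun_nonneg hβ1 _
      have hQK : Qf β (Ufun β K a' K) ≤ Qf β (Ufun β K a K) :=
        Qf_monotoneOn hβ0 hβ1 (Ufun_nonneg hβ1 _) (Ufun_nonneg hβ1 _) hle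
      have hstrict : Qf β (Ufun β K a' k) < Qf β (Ufun β K a k) := by
        rw [hrel, hrel']
        have d1 : Ufun β K a' (K - d) / a' ≤ Ufun β K a (K - d) / a' := by gcongr
        have d2 : Ufun β K a (K - d) / a' < Ufun β K a (K - d) / a := by
          apply div_lt_div_of_pos_left hpos ha haa
        linarith
      have : Ufun β K a' k < Ufun β K a k := by
        by_contra h
        push_neg at h
        have := Qf_monotoneOn hβ0 hβ1 (Ufun_nonneg hβ1 _) (Ufun_nonneg hβ1 _) h
        linarith
      exact ⟨this.le, fun _ => this⟩
  have := (main K le_rfl).2 hK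
  rw [Nat.sub_self] at this
  rw [Ufun_zero hβ0 hβ1 ha, Ufun_zero hβ0 hβ1 ha'] at this
  exact absurd this (lt_irrefl 1)

/-- Each coordinate of the profile is nondecreasing in the load. -/
lemma Ufun_mono_a {β : ℝ} {K : ℕ} {a a' : ℝ} (hβ0 : 0 ≤ β) (hβ1 : β ≤ 1)
    (hK : 1 ≤ K) (ha : 0 < a) (haa : a ≤ a') {k : ℕ} (hk : k ≤ K) :
    Ufun β K a k ≤ Ufun β K a' k := by
  rcases eq_or_lt_of_le haa with rfl | hlt
  · exact le_rfl
  have ha' : 0 < a' := lt_of_lt_of_le ha haa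
  have hKlt := Ufun_K_strict hβ0 hβ1 hK ha hlt
  have hQKlt : Qf β (Ufun β K a K) < Qf β (Ufun β K a' K) :=
    Qf_strictMonoOn hβ0 hβ1 (Set.mem_Ici.2 (Ufun_nonneg hβ1 _))
      (Set.mem_Ici.2 (Ufun_nonneg hβ1 _)) hKlt
  set Y := Qf β (Ufun β K a K) with hY
  set Y' := Qf β (Ufun β K a' K) with hY'
  -- upward induction
  have Pup : ∀ m, m ≤ K → (Y' - Y) * (a * a') ≤ Ufun β K a m * (a' - a) →
      Ufun β K a m ≤ Ufun β K a' m := by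
    intro m
    induction m with
    | zero =>
      intro _ _
      rw [Ufun_zero hβ0 hβ1 ha, Ufun_zero hβ0 hβ1 ha']
    | succ m ih =>
      intro hm hδ
      have hδ' : (Y' - Y) * (a * a') ≤ Ufun β K a m * (a' - a) := by
        have := Ufun_anti (K := K) hβ0 hβ1 ha (Nat.le_succ m)
        nlinarith
      have hIH := ih (by omega) hδ'
      have hX : Qf β (Ufun β K a m) ≤ Qf β (Ufun β K a' m) :=
        Qf_monotoneOn hβ0 hβ1 (Ufun_nonneg hβ1 _) (Ufun_nonneg hβ1 _) hIH
      have hrel := Ufun_rel hβ0 hβ1 ha (by omega : 1 ≤ m+1) (by omega : m+1 ≤ K)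
      have hrel' := Ufun_rel hβ0 hβ1 ha' (by omega : 1 ≤ m+1) (by omega : m+1 ≤ K)
      rw [show m + 1 - 1 = m from rfl] at hrel hrel'
      exact step_up ha hlt hrel hrel' hX hδ
  -- downward induction
  have Pdown : ∀ d, d ≤ K → Ufun β K a (K - d) ≤ Ufun β K a' (K - d) := by
    intro d
    induction d with
    | zero => intro _; rw [Nat.sub_zero]; exact hKlt.le
    | succ d ih =>
      intro hd
      set m := K - (d + 1) with hmdef
      have hm1 : m + 1 = K - d := by omega
      by_cases hcase : (Y' - Y) * (a * a') ≤ Ufun β K a m * (a' - a)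
      · exact Pup m (by omega) hcase
      · push_neg at hcase
        have hIH := ih (by omega)
        rw [← hm1] at hIH
        have hδ : Ufun β K a (m + 1) * (a' - a) ≤ (Y' - Y) * (a * a') := by
          have := Ufun_anti (K := K) hβ0 hβ1 ha (Nat.le_succ m)
          nlinarith
        have hrel := Ufun_rel hβ0 hβ1 ha (by omega : 1 ≤ m+1) (by omega : m+1 ≤ K)
        have hrel' := Ufun_rel hβ0 hβ1 ha' (by omega : 1 ≤ m+1) (by omega : m+1 ≤ K)
        rw [show m + 1 - 1 = m from rfl] at hrel hrel'
        have hX := step_down ha hlt hrel hrel' hIH hδ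
        by_contra h
        push_neg at h
        have := Qf_strictMonoOn hβ0 hβ1 (Set.mem_Ici.2 (Ufun_nonneg hβ1 _))
          (Set.mem_Ici.2 (Ufun_nonneg hβ1 _)) h
        linarith
  have := Pdown (K - k) (by omega)
  rwa [show K - (K - k) = k by omega] at this

lemma Wrec_mono_c {β a c c' : ℝ} (hβ0 : 0 ≤ β) (hβ1 : β ≤ 1) (ha : 0 < a)
    (hc : 0 ≤ c) (hcc : c ≤ c') (n : ℕ) : Wrec β a c n ≤ Wrec β a c' n := by
  rcases eq_or_lt_of_le hcc with rfl | h
  · exact le_rfl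
  · exact (Wrec_strictMono_c hβ0 hβ1 ha hc h n).le

lemma Wrec_contAt_a {β c : ℝ} (hβ0 : 0 ≤ β) (hβ1 : β ≤ 1) {a₀ : ℝ} (ha₀ : 0 < a₀)
    (n : ℕ) : ContinuousAt (fun a => Wrec β a c n) a₀ := by
  have hjoint := Wrec_continuousOn hβ0 hβ1 (β := β) n
  have hmap : Set.MapsTo (fun a : ℝ => (a, c)) {a : ℝ | a ≠ 0} {p : ℝ × ℝ | p.1 ≠ 0} :=
    fun a haa => haa
  have := hjoint.comp ((continuous_id.prodMk continuous_const).continuousOn) hmap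
  exact this.continuousAt (isOpen_ne.mem_nhds ha₀.ne')

lemma cstar_continuousAt {β : ℝ} {K : ℕ} (hβ0 : 0 ≤ β) (hβ1 : β ≤ 1) (hK : 1 ≤ K)
    {a₀ : ℝ} (ha₀ : 0 < a₀) : ContinuousAt (cstar β K) a₀ := by
  have hc₀ := cstar_spec (K := K) hβ0 hβ1 ha₀
  have hc₀pos := cstar_pos hβ0 hβ1 ha₀ hK
  set c₀ := cstar β K a₀ with hc₀def
  rw [ContinuousAt, Metric.tendsto_nhds]
  intro ε hε
  set ε' := min ε c₀ with hε'def
  have hε' : 0 < ε' := lt_min hε hc₀pos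
  set l := c₀ - ε' / 2 with hldef
  set r := c₀ + ε' / 2 with hrdef
  have hl0 : 0 < l := by
    have : ε' ≤ c₀ := min_le_right _ _
    rw [hldef]; linarith
  have hψl : Wrec β a₀ l K < 1 := by
    have := Wrec_strictMono_c hβ0 hβ1 ha₀ hl0.le (show l < c₀ by rw [hldef]; linarith) K
    rwa [hc₀.2.2] at this
  have hψr : 1 < Wrec β a₀ r K := by
    have := Wrec_strictMono_c hβ0 hβ1 ha₀ hc₀.1 (show c₀ < r by rw [hrdef]; linarith) K
    rwa [hc₀.2.2] at this
  have h1 : ∀ᶠ a in nhds a₀, Wrec β a l K < 1 :=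
    (Wrec_contAt_a hβ0 hβ1 ha₀ K).eventually_lt_const hψl
  have h2 : ∀ᶠ a in nhds a₀, 1 < Wrec β a r K :=
    (Wrec_contAt_a hβ0 hβ1 ha₀ K).eventually_const_lt hψr
  have h3 : ∀ᶠ a in nhds a₀, 0 < a := eventually_gt_nhds ha₀
  filter_upwards [h1, h2, h3] with a hal har ha0
  have hca := cstar_spec (K := K) hβ0 hβ1 ha0
  have hgt : l < cstar β K a := by
    by_contra h
    push_neg at h
    have := Wrec_mono_c hβ0 hβ1 ha0 hca.1 h K
    rw [hca.2.2] at this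
    linarith
  have hltr : cstar β K a < r := by
    by_contra h
    push_neg at h
    have hr0 : (0:ℝ) ≤ r := by rw [hrdef]; linarith
    have := Wrec_mono_c hβ0 hβ1 ha0 hr0 h K
    rw [hca.2.2] at this
    linarith
  rw [Real.dist_eq, abs_lt]
  constructor
  · have : ε' ≤ ε := min_le_left _ _
    rw [hldef] at hgt; linarith
  · have : ε' ≤ ε := min_le_left _ _
    rw [hrdef] at hltr; linarith

lemma Ufun_contOn {β : ℝ} {K : ℕ} (hβ0 : 0 ≤ β) (hβ1 : β ≤ 1) (hK : 1 ≤ K) (k : ℕ) :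
    ContinuousOn (fun a => Ufun β K a k) (Set.Ioi 0) := by
  intro a₀ ha₀
  rw [Set.mem_Ioi] at ha₀
  apply ContinuousAt.continuousWithinAt
  have hpair : ContinuousAt (fun a : ℝ => (a, cstar β K a)) a₀ :=
    continuousAt_id.prodMk (cstar_continuousAt hβ0 hβ1 hK ha₀)
  have hopen : IsOpen {p : ℝ × ℝ | p.1 ≠ 0} :=
    isOpen_compl_singleton.preimage continuous_fst
  have hjoint : ContinuousAt (fun p : ℝ × ℝ => Wrec β p.1 p.2 (K - k))
      (a₀, cstar β K a₀) :=
    (Wrec_continuousOn hβ0 hβ1 (K - k)).continuousAt (hopen.mem_nhds ha₀.ne')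
  exact ContinuousAt.comp (f := fun a : ℝ => (a, cstar β K a)) hjoint hpair

lemma Ufun_le_a {β : ℝ} {K : ℕ} {a : ℝ} (hβ0 : 0 ≤ β) (hβ1 : β ≤ 1) (ha : 0 < a)
    (hK : 1 ≤ K) {k : ℕ} (hk : 1 ≤ k) : Ufun β K a k ≤ a := by
  have h1 : Ufun β K a 1 ≤ a := by
    have hrel := Ufun_rel hβ0 hβ1 ha le_rfl hK
    rw [show (1:ℕ) - 1 = 0 from rfl, Ufun_zero hβ0 hβ1 ha, Qf_one] at hrel
    have hQK : 0 ≤ Qf β (Ufun β K a K) := Qf_nonneg hβ0 hβ1 (Ufun_nonneg hβ1 _)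
    have : Ufun β K a 1 / a ≤ 1 := by linarith
    rwa [div_le_one ha] at this
  exact (Ufun_anti hβ0 hβ1 ha hk).trans h1

/-- unique equilibrium point of the clustered mean-field model with
incentives: a unique pair `(ρ, u)` with `ρ > 0`, each `u_i` an incentive profile for
`(ρ r_i, β_i, K_i)`, and `s = Λρ + Σ_c α_c Σ_{k=1}^{K_c} u_{c,k}`. -/
theorem cluster_incentive_equilibrium_exists_unique (C : ℕ) (hC : 1 ≤ C)
    (α : Fin C → ℝ) (hα : ∀ i, 0 < α i) (hαsum : ∑ i, α i = 1)
    (K : Fin C → ℕ) (hK : ∀ i, 1 ≤ K i)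
    (r : Fin C → ℝ) (hr0 : ∀ i, 0 < r i) (hr1 : ∀ i, r i ≤ 1) (hrmax : ∃ i, r i = 1)
    (β : Fin C → ℝ) (hβ : ∀ i, β i ∈ Set.Icc (0 : ℝ) 1)
    (Λ s : ℝ) (hΛ : 0 < Λ) (hs : 0 < s) :
    ∃! p : ℝ × (∀ i : Fin C, Fin (K i + 1) → ℝ),
      0 < p.1 ∧ (∀ i, IsIncentiveProfile (p.1 * r i) (β i) (K i) (p.2 i)) ∧
      s = Λ * p.1 + ∑ i, α i * ∑ k ∈ Finset.Icc 1 (K i), extProfile (K i) (p.2 i) k := by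
  have hβ0 : ∀ i, 0 ≤ β i := fun i => (hβ i).1
  have hβ1 : ∀ i, β i ≤ 1 := fun i => (hβ i).2
  set F : ℝ → ℝ := fun ρ =>
    Λ * ρ + ∑ i, α i * ∑ k ∈ Finset.Icc 1 (K i), Ufun (β i) (K i) (ρ * r i) k with hF
  -- value of the constraint for any valid pair
  have hval : ∀ p : ℝ × (∀ i : Fin C, Fin (K i + 1) → ℝ), 0 < p.1 →
      (∀ i, IsIncentiveProfile (p.1 * r i) (β i) (K i) (p.2 i)) →
      Λ * p.1 + ∑ i, α i * ∑ k ∈ Finset.Icc 1 (K i), extProfile (K i) (p.2 i) k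
        = F p.1 := by
    intro p hp hprof
    rw [hF]
    congr 1
    apply Finset.sum_congr rfl
    intro i _
    congr 1
    apply Finset.sum_congr rfl
    intro k hk
    rw [Finset.mem_Icc] at hk
    have hv : p.2 i = Uprof (β i) (K i) (p.1 * r i) :=
      profile_unique (hβ0 i) (hβ1 i) (mul_pos hp (hr0 i)) (hprof i)
    rw [hv, extProfile_Uprof hk.2]
  -- strict monotonicity of F on positive reals
  have hmono : StrictMonoOn F (Set.Ioi 0) := by
    intro ρ hρ ρ' hρ' hlt
    rw [Set.mem_Ioi] at hρ hρ'
    rw [hF]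
    have hsum : ∀ i : Fin C,
        α i * ∑ k ∈ Finset.Icc 1 (K i), Ufun (β i) (K i) (ρ * r i) k ≤
        α i * ∑ k ∈ Finset.Icc 1 (K i), Ufun (β i) (K i) (ρ' * r i) k := by
      intro i
      apply mul_le_mul_of_nonneg_left ?_ (hα i).le
      apply Finset.sum_le_sum
      intro k hk
      rw [Finset.mem_Icc] at hk
      exact Ufun_mono_a (hβ0 i) (hβ1 i) (hK i) (mul_pos hρ (hr0 i))
        (by nlinarith [hr0 i]) hk.2
    have h1 : Λ * ρ < Λ * ρ' := by nlinarith
    have h2 := Finset.sum_le_sum (s := Finset.univ) (fun i _ => hsum i)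
    simp only
    linarith
  -- continuity of F on positive reals
  have hcont : ContinuousOn F (Set.Ioi 0) := by
    rw [hF]
    apply ContinuousOn.add
    · exact (continuous_const.mul continuous_id).continuousOn
    · apply continuousOn_finset_sum
      intro i _
      apply ContinuousOn.mul continuousOn_const
      apply continuousOn_finset_sum
      intro k _
      have hmap : Set.MapsTo (fun ρ : ℝ => ρ * r i) (Set.Ioi 0) (Set.Ioi 0) :=
        fun ρ hρ => Set.mem_Ioi.2 (mul_pos (Set.mem_Ioi.1 hρ) (hr0 i))
      exact (Ufun_contOn (hβ0 i) (hβ1 i) (hK i) k).comp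
        ((continuous_id.mul continuous_const).continuousOn) hmap
  -- upper and lower bounds
  set M : ℝ := Λ + ∑ i, α i * K i with hM
  have hMpos : 0 < M := by
    rw [hM]
    have : (0:ℝ) ≤ ∑ i, α i * K i :=
      Finset.sum_nonneg (fun i _ => mul_nonneg (hα i).le (Nat.cast_nonneg _))
    linarith
  have hMΛ : Λ ≤ M := by
    rw [hM]
    have : (0:ℝ) ≤ ∑ i, α i * K i :=
      Finset.sum_nonneg (fun i _ => mul_nonneg (hα i).le (Nat.cast_nonneg _))
    linarith
  have hFub : ∀ ρ, 0 < ρ → F ρ ≤ ρ * M := by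
    intro ρ hρ
    rw [hF, hM]
    have hterm : ∀ i : Fin C,
        α i * ∑ k ∈ Finset.Icc 1 (K i), Ufun (β i) (K i) (ρ * r i) k ≤
        α i * (K i * ρ) := by
      intro i
      apply mul_le_mul_of_nonneg_left ?_ (hα i).le
      have hb : ∀ k ∈ Finset.Icc 1 (K i), Ufun (β i) (K i) (ρ * r i) k ≤ ρ := by
        intro k hk
        rw [Finset.mem_Icc] at hk
        have := Ufun_le_a (hβ0 i) (hβ1 i) (mul_pos hρ (hr0 i)) (hK i) hk.1
        nlinarith [hr0 i, hr1 i]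
      calc ∑ k ∈ Finset.Icc 1 (K i), Ufun (β i) (K i) (ρ * r i) k
          ≤ ∑ _k ∈ Finset.Icc 1 (K i), ρ := Finset.sum_le_sum hb
        _ = (K i) * ρ := by
            rw [Finset.sum_const, Nat.card_Icc]
            simp [nsmul_eq_mul]
    have h2 := Finset.sum_le_sum (s := Finset.univ) (fun i _ => hterm i)
    have h3 : ∑ i, α i * (K i * ρ) = (∑ i, α i * K i) * ρ := by
      rw [Finset.sum_mul]
      apply Finset.sum_congr rfl
      intro i _
      ring
    simp only
    rw [mul_comm ρ (Λ + ∑ i, α i * K i), add_mul]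
    linarith
  have hFlb : ∀ ρ, 0 < ρ → Λ * ρ ≤ F ρ := by
    intro ρ hρ
    rw [hF]
    have : (0:ℝ) ≤ ∑ i, α i * ∑ k ∈ Finset.Icc 1 (K i), Ufun (β i) (K i) (ρ * r i) k := by
      apply Finset.sum_nonneg
      intro i _
      apply mul_nonneg (hα i).le
      exact Finset.sum_nonneg (fun k _ => Ufun_nonneg (hβ1 i) k)
    simp only
    linarith
  -- existence of the root via IVT
  set ρ₀ : ℝ := s / (2 * M) with hρ₀
  set ρ₁ : ℝ := s / Λ with hρ₁
  have hρ₀pos : 0 < ρ₀ := div_pos hs (by linarith)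
  have hρ₁pos : 0 < ρ₁ := div_pos hs hΛ
  have hρ₀₁ : ρ₀ ≤ ρ₁ := by
    rw [hρ₀, hρ₁]
    apply div_le_div_of_nonneg_left hs.le hΛ
    linarith
  have hF₀ : F ρ₀ < s := by
    have := hFub ρ₀ hρ₀pos
    have h2 : ρ₀ * M = s / 2 := by
      rw [hρ₀]
      field_simp
    rw [h2] at this
    exact lt_of_le_of_lt this (half_lt_self hs)
  have hF₁ : s ≤ F ρ₁ := by
    have := hFlb ρ₁ hρ₁pos
    have h2 : Λ * ρ₁ = s := by
      rw [hρ₁]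
      field_simp
    linarith [h2 ▸ this]
  have hsub : Set.Icc ρ₀ ρ₁ ⊆ Set.Ioi 0 := fun x hx => lt_of_lt_of_le hρ₀pos hx.1
  obtain ⟨ρstar, hρstarmem, hρstar⟩ :=
    intermediate_value_Icc hρ₀₁ (hcont.mono hsub) ⟨hF₀.le, hF₁⟩
  have hρstarpos : 0 < ρstar := lt_of_lt_of_le hρ₀pos hρstarmem.1
  refine ⟨(ρstar, fun i => Uprof (β i) (K i) (ρstar * r i)), ⟨hρstarpos, ?_, ?_⟩, ?_⟩
  · intro i
    exact Ufun_isProfile (hβ0 i) (hβ1 i) (mul_pos hρstarpos (hr0 i))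
  · rw [hval _ hρstarpos
      (fun i => Ufun_isProfile (hβ0 i) (hβ1 i) (mul_pos hρstarpos (hr0 i)))]
    exact hρstar.symm
  · rintro ⟨ρ', v⟩ ⟨hρ'pos, hprof', hsum'⟩
    have hρ'val : F ρ' = s := by
      have h : Λ * ρ' + ∑ i, α i * ∑ k ∈ Finset.Icc 1 (K i), extProfile (K i) (v i) k
          = F ρ' := hval (ρ', v) hρ'pos hprof'
      rw [← h]
      exact hsum'.symm
    have hρeq : ρ' = ρstar := by
      apply hmono.injOn (Set.mem_Ioi.2 hρ'pos) (Set.mem_Ioi.2 hρstarpos)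
      rw [hρ'val, hρstar]
    have hv : v = fun i => Uprof (β i) (K i) (ρstar * r i) := by
      funext i
      have h := profile_unique (hβ0 i) (hβ1 i) (mul_pos hρ'pos (hr0 i)) (hprof' i)
      rw [hρeq] at h
      exact h
    exact Prod.ext hρeq hv
end
end

section
/- Let K ≥ 1 be an integer and let ρ ∈ [1 − 2^{−K/2}, 1]. Then the unique two-choice profile for (ρ, K) satisfies P(ρ, K) = (1 − ν_{ρ,K}(1)) + ν_{ρ,K}(K) ≤ 4 √K · 2^{−K/2}. -/
open Finset Real

noncomputable section

lemma aux_half (x : ℝ) (hx : 0 ≤ x) (h : 1/4 ≤ x^2) : 1/2 ≤ x := by nlinarith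
lemma aux_le_one (x : ℝ) (hx : 0 ≤ x) (h : x^2 ≤ 1) : x ≤ 1 := by nlinarith
lemma aux_sq_le (x y : ℝ) (hx : 0 ≤ x) (h : x ≤ y) : x^2 ≤ y^2 := by nlinarith
lemma aux_sq_le_self (x : ℝ) (hx : 0 ≤ x) (h : x ≤ 1) : x^2 ≤ x := by nlinarith

lemma two_pow_le_four_mul (K : ℕ) (h1 : 1 ≤ K) (h2 : K ≤ 3) : 2^K ≤ 4*K := by
  interval_cases K <;> norm_num


set_option maxHeartbeats 1000000 in
/-- for `ρ ∈ [1 − 2^{−K/2}, 1]`, the unique two-choice profile satisfies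
`P(ρ, K) = (1 − ν_{ρ,K}(1)) + ν_{ρ,K}(K) ≤ 4 √K · 2^{−K/2}`. -/
theorem problematic_bound_near_one (K : ℕ) (hK : 1 ≤ K) (ρ : ℝ)
    (hρ : ρ ∈ Set.Icc (1 - (2 : ℝ) ^ (-(K : ℝ) / 2)) 1)
    (v : Fin (K + 1) → ℝ) (hv : IsTwoChoiceProfile ρ K v) :
    (1 - extProfile K v 1) + extProfile K v K ≤
      4 * Real.sqrt K * (2 : ℝ) ^ (-(K : ℝ) / 2) := by
  obtain ⟨hw0, hmono, hKnn, hrec⟩ := hv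
  obtain ⟨hρ1, hρ2⟩ := hρ
  set w : ℕ → ℝ := extProfile K v with hw
  set ε : ℝ := (2 : ℝ) ^ (-(K : ℝ) / 2) with hε
  have hεpos : 0 < ε := Real.rpow_pos_of_pos two_pos _
  have hε1 : ε ≤ 1 := by
    apply Real.rpow_le_one_of_one_le_of_nonpos (by norm_num)
    have : (0:ℝ) ≤ K := Nat.cast_nonneg K
    linarith
  have hwK1 : w (K + 1) = 0 := by simp [hw, extProfile]
  -- antitonicity
  have hanti : ∀ a b : ℕ, a ≤ b → b ≤ K → w b ≤ w a := by
    intro a b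
    induction b with
    | zero =>
      intro hab _
      have : a = 0 := by omega
      rw [this]
    | succ n ih =>
      intro hab hbK
      rcases Nat.eq_or_lt_of_le hab with h | h
      · rw [h]
      · exact le_trans (hmono n (by omega)) (ih (by omega) (by omega))
  have hnn : ∀ k, k ≤ K → 0 ≤ w k := fun k hk => le_trans hKnn (hanti k K hk le_rfl)
  -- telescoped identity
  have htel0 : ∀ n : ℕ, ∀ k, 1 ≤ k → k ≤ K → K - k = n →
      w k = ρ * (w (k - 1) ^ 2 - w K ^ 2) := by
    intro n
    induction n with
    | zero =>
      intro k h1 h2 h3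
      have hkK : k = K := by omega
      subst hkK
      have h := hrec k h1 h2
      rw [hwK1] at h
      linarith
    | succ n ih =>
      intro k h1 h2 h3
      have h4 := ih (k + 1) (by omega) (by omega) (by omega)
      simp only [Nat.add_sub_cancel] at h4
      have h5 := hrec k h1 h2
      linear_combination h5 + h4
  have htel : ∀ k, 1 ≤ k → k ≤ K → w k = ρ * (w (k - 1) ^ 2 - w K ^ 2) :=
    fun k h1 h2 => htel0 (K - k) k h1 h2 rfl
  have hW1 : w 1 = ρ * (1 - w K ^ 2) := by
    have h := htel 1 le_rfl hK
    rw [show (1:ℕ) - 1 = 0 from rfl, hw0] at h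
    linear_combination h
  have htnn : 0 ≤ w K := hKnn
  have hunn : 0 ≤ w 1 := hnn 1 hK
  have htu : w K ≤ w 1 := hanti 1 K hK le_rfl
  have hu1 : w 1 ≤ 1 := by
    have h := hanti 0 1 (by omega) hK
    rw [hw0] at h; exact h
  have h1mu : 1 - w 1 ≤ ε + w K ^ 2 := by
    nlinarith [hW1, mul_nonneg (by linarith : (0:ℝ) ≤ 1 - ρ) (sq_nonneg (w K))]
  have hsqK1 : (1 : ℝ) ≤ Real.sqrt K := by
    have h := Real.sqrt_le_sqrt (show (1:ℝ) ≤ (K:ℝ) by exact_mod_cast hK)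
    rwa [Real.sqrt_one] at h
  have hsqKsq : Real.sqrt K ^ 2 = (K:ℝ) := Real.sq_sqrt (Nat.cast_nonneg K)
  have hxnn : (0:ℝ) ≤ Real.sqrt K * ε := mul_nonneg (Real.sqrt_nonneg (K:ℝ)) hεpos.le
  have hε2 : ε ^ 2 = (2 : ℝ) ^ (-(K : ℝ)) := by
    rw [hε, ← Real.rpow_natCast ((2:ℝ) ^ (-(K:ℝ)/2)) 2, ← Real.rpow_mul (by norm_num)]
    norm_num
  have hinv : (2:ℝ) ^ (-(K:ℝ)) = ((2:ℝ) ^ K)⁻¹ := by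
    rw [Real.rpow_neg (by norm_num), Real.rpow_natCast]
  -- √K * ε ≤ 1
  have hKpow : (K : ℝ) ≤ (2 : ℝ) ^ K := by
    exact_mod_cast (Nat.lt_two_pow_self (n := K)).le
  have hKe2 : (K : ℝ) * ε ^ 2 ≤ 1 := by
    rw [hε2, hinv]
    rw [← div_eq_mul_inv, div_le_one (by positivity)]
    exact hKpow
  have hxx : (Real.sqrt K * ε)^2 = (K:ℝ) * ε^2 := by rw [mul_pow, hsqKsq]
  have hsKε : Real.sqrt K * ε ≤ 1 :=
    aux_le_one _ hxnn (by rw [hxx]; exact hKe2)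
  -- pointwise squaring bound
  have hle : ∀ k, 1 ≤ k → k ≤ K → w k ≤ w (k - 1) ^ 2 := by
    intro k h1 h2
    have h := htel k h1 h2
    have hta : w K ≤ w (k - 1) := hanti (k-1) K (by omega) le_rfl
    have h2' : w K ^ 2 ≤ w (k-1) ^ 2 := pow_le_pow_left₀ htnn hta 2
    nlinarith [mul_nonneg (by linarith : (0:ℝ) ≤ 1 - ρ)
      (by linarith : (0:ℝ) ≤ w (k-1)^2 - w K ^2), sq_nonneg (w K)]
  -- iterated squaring
  have hpow : ∀ k, 1 ≤ k → k ≤ K → w k ≤ (w 1) ^ (2 ^ (k - 1)) := by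
    intro k h1
    induction k, h1 using Nat.le_induction with
    | base => intro _; norm_num
    | succ k hk ih =>
      intro hkK
      have e1 : w (k+1) ≤ w k ^ 2 := by
        have h := hle (k+1) (by omega) hkK
        simpa using h
      have e2 : w k ^ 2 ≤ ((w 1) ^ (2 ^ (k-1))) ^ 2 :=
        pow_le_pow_left₀ (hnn k (by omega)) (ih (by omega)) 2
      have e3 : ((w 1) ^ (2 ^ (k-1))) ^ 2 = (w 1) ^ (2 ^ ((k+1) - 1)) := by
        rw [← pow_mul]
        congr 1
        rw [show 2 ^ (k-1) * 2 = 2 ^ (k-1+1) from (pow_succ 2 (k-1)).symm]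
        congr 1
        omega
      calc w (k+1) ≤ w k ^ 2 := e1
        _ ≤ ((w 1) ^ (2 ^ (k-1))) ^ 2 := e2
        _ = _ := e3
  have htK2 : w K ≤ (w 1) ^ (2 ^ (K - 1)) := hpow K hK le_rfl
  rcases le_or_gt K 3 with hK3 | hK4
  · -- small K : LHS ≤ 2 ≤ RHS
    have h2K : ((2:ℝ))^K ≤ 4 * (K:ℝ) := by
      exact_mod_cast two_pow_le_four_mul K hK hK3
    have h14 : (1:ℝ)/4 ≤ (K:ℝ) * ε ^ 2 := by
      rw [hε2, hinv, ← div_eq_mul_inv, le_div_iff₀ (by positivity)]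
      linarith
    have hhalf : (1:ℝ)/2 ≤ Real.sqrt K * ε :=
      aux_half _ hxnn (by rw [hxx]; exact h14)
    linarith
  · -- K ≥ 4
    have hε14 : ε ≤ 1/4 := by
      have h2 : (2:ℝ) ^ (-2:ℝ) = 1/4 := by
        rw [show (-2:ℝ) = ((-2:ℤ):ℝ) by norm_num, Real.rpow_intCast]
        norm_num
      rw [hε, ← h2]
      apply Real.rpow_le_rpow_of_exponent_le (by norm_num)
      have h4 : (4:ℝ) ≤ K := by exact_mod_cast hK4
      linarith
  
    have htsK : w K ≤ Real.sqrt K * ε := by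
      by_contra hcon
      push_neg at hcon
      have hKt2 : (K:ℝ) * ε ^ 2 ≤ w K ^ 2 := by
        rw [← hxx]
        exact aux_sq_le _ _ hxnn hcon.le
      have hub : w 1 ≤ 1 - (1 - ε) * w K ^ 2 := by
        nlinarith [sq_nonneg (w K)]
      have hbnn : 0 ≤ 1 - (1 - ε) * w K ^ 2 := le_trans hunn hub
      set n : ℕ := 2 ^ (K - 1) with hn
      have c1 : w K ≤ (1 - (1-ε) * w K ^2) ^ n :=
        le_trans htK2 (pow_le_pow_left₀ hunn hub n)
      have c2 : (1 - (1-ε) * w K ^2) ≤ Real.exp (-((1-ε) * w K ^2)) := by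
        have h := Real.add_one_le_exp (-((1-ε) * w K ^2)); linarith
      have c3 : (1 - (1-ε) * w K ^2) ^ n ≤ Real.exp (-((1-ε) * w K ^2)) ^ n :=
        pow_le_pow_left₀ hbnn c2 n
      have c4 : Real.exp (-((1-ε) * w K ^2)) ^ n
          = Real.exp ((n:ℝ) * (-((1-ε) * w K ^2))) := (Real.exp_nat_mul _ n).symm
      have hnr : (n:ℝ) = (2:ℝ) ^ ((K:ℝ) - 1) := by
        have h1 : ((K - 1 : ℕ) : ℝ) = (K:ℝ) - 1 := by
          have h2 := Nat.cast_sub (R := ℝ) hK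
          simpa using h2
        rw [hn]
        push_cast
        rw [← Real.rpow_natCast 2 (K-1), h1]
      have hεn : ε ^ 2 * (n:ℝ) = 1/2 := by
        rw [hε2, hnr, ← Real.rpow_add two_pos]
        rw [show -(K:ℝ) + ((K:ℝ) - 1) = ((-1:ℤ):ℝ) by push_cast; ring, Real.rpow_intCast]
        norm_num
      have hlog : Real.log 2 ≤ 1 - ε := by
        have h := Real.log_two_lt_d9; linarith
      have hA : (K:ℝ)/2 ≤ w K ^2 * (n:ℝ) := by
        have hint : (0:ℝ) ≤ (w K ^2 - (K:ℝ) * ε^2) * (n:ℝ) :=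
          mul_nonneg (by linarith) (Nat.cast_nonneg n)
        have hKn : (K:ℝ) * (ε^2 * (n:ℝ)) = (K:ℝ)/2 := by rw [hεn]; ring
        linarith [hint, hKn]
      have hc5 : Real.log 2 * ((K:ℝ)/2) ≤ (1-ε) * (w K ^2 * (n:ℝ)) := by
        apply mul_le_mul hlog hA (by positivity) (by linarith)
      have c5 : (n:ℝ) * (-((1-ε) * w K ^2)) ≤ Real.log 2 * (-(K:ℝ)/2) := by
        linarith [hc5]
      have c6 : Real.exp (Real.log 2 * (-(K:ℝ)/2)) = ε :=
        (Real.rpow_def_of_pos two_pos _).symm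
      have hfin : w K ≤ ε := by
        calc w K ≤ (1 - (1-ε) * w K ^2) ^ n := c1
          _ ≤ Real.exp (-((1-ε) * w K ^2)) ^ n := c3
          _ = Real.exp ((n:ℝ) * (-((1-ε) * w K ^2))) := c4
          _ ≤ Real.exp (Real.log 2 * (-(K:ℝ)/2)) := Real.exp_le_exp.mpr c5
          _ = ε := c6
      have : ε ≤ Real.sqrt K * ε := le_mul_of_one_le_left hεpos.le hsqK1
      linarith
    -- conclude
    have ht2 : w K ^ 2 ≤ (K:ℝ) * ε ^ 2 := by
      have h := pow_le_pow_left₀ htnn htsK 2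
      rwa [hxx] at h
    have hKε2 : (K:ℝ) * ε^2 ≤ Real.sqrt K * ε := by
      rw [← hxx]
      exact aux_sq_le_self _ hxnn hsKε
    have hεsK : ε ≤ Real.sqrt K * ε := le_mul_of_one_le_left hεpos.le hsqK1
    linarith
end
end

section
/- Let K ≥ 1 be an integer. Then Σ_{k=1}^{K} ν_{1−2^{−K/2}, K}(k) ≤ K/2 and Σ_{k=1}^{K} ν_{1, K}(k) ≥ K − log₂ K − 3. -/
open Finset Real

noncomputable section

namespace TCAux

/-- forward recursion with parameter c -/
def w (ρ c : ℝ) : ℕ → ℝ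
  | 0 => 1
  | n+1 => ρ * ((w ρ c n)^2 - c)

lemma w_cont (ρ : ℝ) (n : ℕ) : Continuous (fun c => w ρ c n) := by
  induction n with
  | zero => simpa [w] using continuous_const
  | succ n ih =>
      simp only [w]
      exact continuous_const.mul ((ih.pow 2).sub continuous_id)

lemma w_zero_pos (ρ : ℝ) (hρ : 0 < ρ) (n : ℕ) : 0 < w ρ 0 n := by
  induction n with
  | zero => norm_num [w]
  | succ n ih => simpa [w] using mul_pos hρ (by positivity)

lemma w_half_bdd (ρ : ℝ) (hρ0 : 0 < ρ) (hρ1 : ρ ≤ 1) (n : ℕ) :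
    -(1/2) ≤ w ρ (1/2) (n+1) ∧ w ρ (1/2) (n+1) ≤ 1/2 := by
  induction n with
  | zero =>
      simp only [w]
      norm_num
      constructor <;> nlinarith
  | succ n ih =>
      obtain ⟨h1, h2⟩ := ih
      simp only [w] at *
      constructor <;> nlinarith [sq_nonneg (w ρ (1/2) (n+1))]

/-- existence of a fixed point c with (w ρ c K)^2 = c, 0 < c ≤ 1/2 -/
lemma exists_c (ρ : ℝ) (hρ0 : 0 < ρ) (hρ1 : ρ ≤ 1) (K : ℕ) (hK : 1 ≤ K) :
    ∃ c : ℝ, 0 < c ∧ c ≤ 1/2 ∧ (w ρ c K)^2 = c := by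
  have hcont : ContinuousOn (fun c => (w ρ c K)^2 - c) (Set.Icc 0 (1/2)) :=
    (((w_cont ρ K).pow 2).sub continuous_id).continuousOn
  have h0 : (0:ℝ) ≤ (w ρ 0 K)^2 - 0 := by
    have := w_zero_pos ρ hρ0 K; nlinarith
  have h12 : (w ρ (1/2) K)^2 - 1/2 ≤ 0 := by
    obtain ⟨m, rfl⟩ := Nat.exists_eq_add_of_le hK
    obtain ⟨h1, h2⟩ := w_half_bdd ρ hρ0 hρ1 m
    have : w ρ (1/2) (1+m) = w ρ (1/2) (m+1) := by rw [Nat.add_comm]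
    rw [this]
    nlinarith
  have := intermediate_value_Icc' (by norm_num : (0:ℝ) ≤ 1/2) hcont
  have hmem : (0:ℝ) ∈ (fun c => (w ρ c K)^2 - c) '' Set.Icc 0 (1/2) := by
    apply this
    simp only [Set.mem_Icc]
    constructor <;> [exact h12; simpa using h0]
  obtain ⟨c, hc, hfc⟩ := hmem
  simp only [Set.mem_Icc] at hc
  have hfc' : (w ρ c K)^2 - c = 0 := hfc
  refine ⟨c, ?_, hc.2, by linarith⟩
  rcases lt_or_eq_of_le hc.1 with h | h
  · exact h
  · exfalso
    rw [← h] at hfc'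
    have := w_zero_pos ρ hρ0 K
    nlinarith

end TCAux

section
variable (ρ c : ℝ) (K : ℕ)

namespace TCAux

/-- if the square ever drops below c before K, it can never return -/
lemma w_sq_ge (hρ0 : 0 < ρ) (hρ1 : ρ ≤ 1) (hc0 : 0 < c) (hc1 : c ≤ 1/2)
    (hfix : (w ρ c K)^2 = c) : ∀ j < K, c ≤ (w ρ c j)^2 := by
  intro j hjK
  by_contra hlt
  push_neg at hlt
  -- trapped: for all i with j+1 ≤ i ≤ K, w i ∈ [-ρc, 0] and (w i)^2 < c
  have trap : ∀ i, j+1 ≤ i → i ≤ K → (-(ρ*c) ≤ w ρ c i ∧ w ρ c i ≤ 0 ∧ (w ρ c i)^2 < c) := by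
    intro i hi
    induction i, hi using Nat.le_induction with
    | base =>
        intro _
        have h1 : w ρ c (j+1) = ρ * ((w ρ c j)^2 - c) := rfl
        have hsq : 0 ≤ (w ρ c j)^2 := sq_nonneg _
        have hm1 : 0 ≤ ρ * (w ρ c j)^2 := mul_nonneg hρ0.le hsq
        have hm2 : 0 < ρ * (c - (w ρ c j)^2) := mul_pos hρ0 (by linarith)
        have ha1 : -(ρ*c) ≤ w ρ c (j+1) := by rw [h1]; nlinarith
        have ha2 : w ρ c (j+1) ≤ 0 := by rw [h1]; nlinarith
        have hrc : (0:ℝ) ≤ ρ*c := le_of_lt (mul_pos hρ0 hc0)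
        have ha3 : (w ρ c (j+1))^2 ≤ (ρ*c)^2 := sq_le_sq' ha1 (le_trans ha2 hrc)
        refine ⟨ha1, ha2, ?_⟩
        have hb1 : (ρ*c)^2 ≤ c^2 := by
          nlinarith [mul_nonneg (mul_nonneg (sq_nonneg c) (by linarith : (0:ℝ) ≤ 1-ρ)) (by linarith : (0:ℝ) ≤ 1+ρ)]
        have hb2 : c^2 < c := by nlinarith
        linarith
    | succ i hi ih =>
        intro hiK
        obtain ⟨h1, h2, h3⟩ := ih (by omega)
        have h4 : w ρ c (i+1) = ρ * ((w ρ c i)^2 - c) := rfl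
        have hsq : 0 ≤ (w ρ c i)^2 := sq_nonneg _
        have hm1 : 0 ≤ ρ * (w ρ c i)^2 := mul_nonneg hρ0.le hsq
        have hm2 : 0 < ρ * (c - (w ρ c i)^2) := mul_pos hρ0 (by linarith)
        have ha1 : -(ρ*c) ≤ w ρ c (i+1) := by rw [h4]; nlinarith
        have ha2 : w ρ c (i+1) ≤ 0 := by rw [h4]; nlinarith
        have hrc : (0:ℝ) ≤ ρ*c := le_of_lt (mul_pos hρ0 hc0)
        have ha3 : (w ρ c (i+1))^2 ≤ (ρ*c)^2 := sq_le_sq' ha1 (le_trans ha2 hrc)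
        refine ⟨ha1, ha2, ?_⟩
        have hb1 : (ρ*c)^2 ≤ c^2 := by
          nlinarith [mul_nonneg (mul_nonneg (sq_nonneg c) (by linarith : (0:ℝ) ≤ 1-ρ)) (by linarith : (0:ℝ) ≤ 1+ρ)]
        have hb2 : c^2 < c := by nlinarith
        linarith
  obtain ⟨-, -, h3⟩ := trap K (by omega) le_rfl
  rw [hfix] at h3
  exact lt_irrefl _ h3

lemma w_nonneg (hρ0 : 0 < ρ) (hρ1 : ρ ≤ 1) (hc0 : 0 < c) (hc1 : c ≤ 1/2)
    (hfix : (w ρ c K)^2 = c) : ∀ j ≤ K, 0 ≤ w ρ c j := by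
  intro j hj
  cases j with
  | zero => norm_num [w]
  | succ i =>
      have h := w_sq_ge ρ c K hρ0 hρ1 hc0 hc1 hfix i (by omega)
      have : w ρ c (i+1) = ρ * ((w ρ c i)^2 - c) := rfl
      nlinarith

lemma w_mono (hρ0 : 0 < ρ) (hρ1 : ρ ≤ 1) (hc0 : 0 < c) (hc1 : c ≤ 1/2)
    (hfix : (w ρ c K)^2 = c) : ∀ k < K, w ρ c (k+1) ≤ w ρ c k := by
  intro k
  induction k with
  | zero =>
      intro _
      have : w ρ c 1 = ρ * ((w ρ c 0)^2 - c) := rfl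
      have h0 : w ρ c 0 = 1 := rfl
      nlinarith
  | succ k ih =>
      intro hk
      have hle := ih (by omega)
      have ha : 0 ≤ w ρ c (k+1) := w_nonneg ρ c K hρ0 hρ1 hc0 hc1 hfix (k+1) (by omega)
      have h1 : w ρ c (k+1+1) = ρ * ((w ρ c (k+1))^2 - c) := rfl
      have h2 : w ρ c (k+1) = ρ * ((w ρ c k)^2 - c) := rfl
      have hsq : (w ρ c (k+1))^2 ≤ (w ρ c k)^2 := by nlinarith
      have := mul_le_mul_of_nonneg_left (sub_le_sub_right hsq c) hρ0.le
      linarith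

/-- existence of a two-choice profile for 0 < ρ ≤ 1 -/
lemma exists_profile (hρ0 : 0 < ρ) (hρ1 : ρ ≤ 1) (hK : 1 ≤ K) :
    ∃ v : Fin (K+1) → ℝ, IsTwoChoiceProfile ρ K v := by
  obtain ⟨c, hc0, hc1, hfix⟩ := exists_c ρ hρ0 hρ1 K hK
  refine ⟨fun i => w ρ c i.val, ?_, ?_, ?_, ?_⟩
  · simp [extProfile, w]
  · intro k hk
    have h1 : extProfile K (fun i => w ρ c i.val) (k+1) = w ρ c (k+1) := by
      rw [extProfile, dif_pos (by omega)]
    have h2 : extProfile K (fun i => w ρ c i.val) k = w ρ c k := by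
      rw [extProfile, dif_pos (by omega)]
    rw [h1, h2]
    exact w_mono ρ c K hρ0 hρ1 hc0 hc1 hfix k hk
  · have h1 : extProfile K (fun i => w ρ c i.val) K = w ρ c K := by
      rw [extProfile, dif_pos (by omega)]
    rw [h1]
    exact w_nonneg ρ c K hρ0 hρ1 hc0 hc1 hfix K le_rfl
  · intro k hk1 hkK
    obtain ⟨j, rfl⟩ : ∃ j, k = j + 1 := ⟨k - 1, by omega⟩
    have hj : extProfile K (fun i => w ρ c i.val) (j+1-1) = w ρ c j := by
      rw [Nat.add_sub_cancel, extProfile, dif_pos (by omega)]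
    have hj1 : extProfile K (fun i => w ρ c i.val) (j+1) = w ρ c (j+1) := by
      rw [extProfile, dif_pos (by omega)]
    rw [hj, hj1]
    have hrec : w ρ c (j+1) = ρ * ((w ρ c j)^2 - c) := rfl
    rcases Nat.lt_or_ge (j+1) K with h | h
    · have hj2 : extProfile K (fun i => w ρ c i.val) (j+1+1) = w ρ c (j+2) := by
        rw [extProfile, dif_pos (by omega)]
      rw [hj2]
      have hrec2 : w ρ c (j+2) = ρ * ((w ρ c (j+1))^2 - c) := rfl
      rw [hrec2, hrec]; ring
    · have hKj : j + 1 = K := by omega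
      subst hKj
      have hj2 : extProfile (j+1) (fun i => w ρ c i.val) (j+1+1) = 0 := by
        rw [extProfile, dif_neg (by omega)]
      rw [hj2]
      linear_combination hrec + ρ * hfix

end TCAux
end

namespace TCAux

section Derived
variable {ρ : ℝ} {K : ℕ} {v : Fin (K+1) → ℝ}

lemma ext_top (v : Fin (K+1) → ℝ) : extProfile K v (K+1) = 0 := by
  rw [extProfile, dif_neg (by omega)]

variable (hP : IsTwoChoiceProfile ρ K v)
include hP

lemma W_K_le : ∀ j ≤ K, extProfile K v K ≤ extProfile K v j := by
  have H : ∀ d j, j + d = K → extProfile K v K ≤ extProfile K v j := by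
    intro d
    induction d with
    | zero => intro j hj; rw [show j = K from by omega]
    | succ d ih =>
        intro j hj
        have h1 := ih (j+1) (by omega)
        have h2 := hP.2.1 j (by omega)
        linarith
  intro j hj
  exact H (K - j) j (by omega)

lemma W_nonneg : ∀ j ≤ K, 0 ≤ extProfile K v j :=
  fun j hj => le_trans hP.2.2.1 (W_K_le hP j hj)

lemma W_le_one : ∀ j ≤ K, extProfile K v j ≤ 1 := by
  intro j
  induction j with
  | zero => intro _; rw [hP.1]
  | succ j ih =>
      intro hj
      have h1 := hP.2.1 j (by omega)
      have h2 := ih (by omega)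
      linarith

/-- telescoped identity: `v_j = ρ (v_{j-1}^2 - v_K^2)` for `1 ≤ j ≤ K`. -/
lemma W_tel : ∀ j, 1 ≤ j → j ≤ K →
    extProfile K v j = ρ * ((extProfile K v (j-1))^2 - (extProfile K v K)^2) := by
  have H : ∀ d j, 1 ≤ j → j + d = K →
      extProfile K v j = ρ * ((extProfile K v (j-1))^2 - (extProfile K v K)^2) := by
    intro d
    induction d with
    | zero =>
        intro j hj1 hj
        have h := hP.2.2.2 j hj1 (by omega)
        rw [show j = K from by omega] at h ⊢
        rw [ext_top v] at h
        linarith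
    | succ d ih =>
        intro j hj1 hj
        have h1 := ih (j+1) (by omega) (by omega)
        have h2 := hP.2.2.2 j hj1 (by omega)
        rw [Nat.add_sub_cancel] at h1
        have : extProfile K v j - extProfile K v (j+1) =
            ρ * ((extProfile K v (j-1))^2 - (extProfile K v j)^2) := h2
        linarith
  intro j hj1 hjK
  exact H (K - j) j hj1 (by omega)

/-- doubly exponential upper bound `v_k ≤ ρ^(2^k - 1)` (for `0 < ρ`). -/
lemma W_upper (hρ0 : 0 < ρ) : ∀ k, 1 ≤ k → k ≤ K →
    extProfile K v k ≤ ρ ^ (2^k - 1) := by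
  intro k hk1
  induction k, hk1 using Nat.le_induction with
  | base =>
      intro h1K
      have h := W_tel hP 1 le_rfl h1K
      have h0 : extProfile K v (1-1) = 1 := hP.1
      have hsq : 0 ≤ (extProfile K v K)^2 := sq_nonneg _
      have : extProfile K v 1 ≤ ρ := by rw [h, h0]; nlinarith
      simpa using this
  | succ k hk ih =>
      intro hkK
      have h := W_tel hP (k+1) (by omega) hkK
      rw [Nat.add_sub_cancel] at h
      have hknn := W_nonneg hP k (by omega)
      have hkb := ih (by omega)
      have hsq : (extProfile K v k)^2 ≤ (ρ ^ (2^k - 1))^2 := by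
        apply sq_le_sq' (by linarith) hkb
      have hstep : extProfile K v (k+1) ≤ ρ * (ρ ^ (2^k - 1))^2 := by
        have hsqK : 0 ≤ (extProfile K v K)^2 := sq_nonneg _
        rw [h]
        nlinarith
      calc extProfile K v (k+1) ≤ ρ * (ρ ^ (2^k - 1))^2 := hstep
        _ = ρ ^ (2^(k+1) - 1) := by
            rw [← pow_mul, ← pow_succ']
            congr 1
            have : 1 ≤ 2^k := Nat.one_le_two_pow
            rw [pow_succ]
            omega

end Derived
end TCAux

namespace TCAux

lemma log2_pos : (0:ℝ) < Real.log 2 := Real.log_pos (by norm_num)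

lemma x_le_logb_one_add {x : ℝ} (h0 : 0 ≤ x) (h1 : x ≤ 1) : x ≤ logb 2 (1+x) := by
  have hconv := convexOn_exp.2 (Set.mem_univ (0:ℝ)) (Set.mem_univ (Real.log 2))
      (by linarith : (0:ℝ) ≤ 1 - x) h0 (by ring)
  simp only [smul_eq_mul, mul_zero, zero_add, Real.exp_zero,
    Real.exp_log (by norm_num : (0:ℝ) < 2)] at hconv
  have hexp : Real.exp (x * Real.log 2) ≤ 1 + x := by linarith
  have hlog : x * Real.log 2 ≤ Real.log (1+x) :=
    (Real.le_log_iff_exp_le (by linarith)).2 hexp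
  rw [Real.logb, le_div_iff₀ log2_pos]
  exact hlog

lemma x_le_neg_logb_one_sub {x : ℝ} (h0 : 0 ≤ x) (h1 : x < 1) : x ≤ -logb 2 (1-x) := by
  have h2 : (1:ℝ) - x ≤ Real.exp (-x) := by linarith [Real.add_one_le_exp (-x)]
  have hlog : Real.log (1-x) ≤ -x := by
    calc Real.log (1-x) ≤ Real.log (Real.exp (-x)) :=
          Real.log_le_log (by linarith) h2
      _ = -x := Real.log_exp _
  have hl2 : Real.log 2 ≤ 1 := by linarith [Real.log_two_lt_d9]
  rw [Real.logb, le_neg, div_le_iff₀ log2_pos]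
  nlinarith


lemma logb_le_one {x : ℝ} (h0 : 0 ≤ x) (h1 : x ≤ 1) : logb 2 (1+x) ≤ 1 := by
  have h := Real.log_le_log (by linarith : (0:ℝ) < 1+x) (by linarith : 1+x ≤ 2)
  rw [Real.logb, div_le_one log2_pos]
  exact h

/-- the key step inequality -/
lemma key_ineq {x : ℝ} (h0 : 0 ≤ x) (h1 : x < 1) :
    x + x * (-logb 2 (1 - x^2)) ≤ -logb 2 (1-x) := by
  have hfac : (1:ℝ) - x^2 = (1-x)*(1+x) := by ring
  have hmul : logb 2 (1 - x^2) = logb 2 (1-x) + logb 2 (1+x) := by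
    rw [hfac]
    exact Real.logb_mul (by linarith) (by linarith)
  rw [hmul]
  have hA := x_le_logb_one_add h0 h1.le
  have hB := x_le_neg_logb_one_sub h0 h1
  have hC := logb_le_one h0 h1.le
  -- x*(1 - logb 2 (1+x)) ≤ x*(1-x) ≤ (1-x)*(-logb 2 (1-x))
  nlinarith [mul_le_mul_of_nonneg_left hA h0,
    mul_le_mul_of_nonneg_left hB (by linarith : (0:ℝ) ≤ 1 - x)]

/-- reindexing identity for the doubly-exponential sum -/
lemma F_shift : ∀ (m : ℕ) (x : ℝ),
    ∑ k ∈ Icc 1 (m+1), x^(2^k-1) = x + x * ∑ k ∈ Icc 1 m, (x^2)^(2^k-1) := by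
  intro m
  induction m with
  | zero => intro x; simp
  | succ m ih =>
      intro x
      rw [Finset.sum_Icc_succ_top (by omega), ih x,
          Finset.sum_Icc_succ_top (by omega : 1 ≤ m+1)]
      have hx : x^(2^(m+1+1)-1) = x * (x^2)^(2^(m+1)-1) := by
        rw [← pow_mul, ← pow_succ']
        congr 1
        have : 1 ≤ 2^(m+1) := Nat.one_le_two_pow
        rw [pow_succ]
        omega
      rw [hx]; ring

/-- the doubly-exponential sum bound -/
lemma F_bound : ∀ (n : ℕ) (x : ℝ), 0 ≤ x → x < 1 →
    ∑ k ∈ Icc 1 n, x^(2^k-1) ≤ -logb 2 (1-x) := by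
  intro n
  induction n with
  | zero =>
      intro x h0 h1
      rw [Finset.Icc_eq_empty (by omega), Finset.sum_empty]
      linarith [Real.logb_nonpos (by norm_num : (1:ℝ) < 2) (by linarith : (0:ℝ) ≤ 1-x)
        (by linarith : (1:ℝ)-x ≤ 1)]
  | succ n ih =>
      intro x h0 h1
      rw [F_shift n x]
      have hx2 : x^2 < 1 := by nlinarith
      have h := ih (x^2) (sq_nonneg x) hx2
      have := mul_le_mul_of_nonneg_left h h0
      have hkey := key_ineq h0 h1
      calc x + x * ∑ k ∈ Icc 1 n, (x^2)^(2^k-1)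
          ≤ x + x * (-logb 2 (1 - x^2)) := by linarith
        _ ≤ -logb 2 (1-x) := hkey

end TCAux


namespace TCAux

lemma nu_spec (ρ : ℝ) (K : ℕ) (hρ0 : 0 < ρ) (hρ1 : ρ ≤ 1) (hK : 1 ≤ K) :
    IsTwoChoiceProfile ρ K (nu ρ K) :=
  Classical.epsilon_spec (exists_profile ρ K hρ0 hρ1 hK)

lemma part1 (K : ℕ) (hK : 1 ≤ K) :
    ∑ k ∈ Finset.Icc 1 K, nuV (1 - (2 : ℝ) ^ (-(K : ℝ) / 2)) K k ≤ (K : ℝ) / 2 := by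
  set ε : ℝ := (2 : ℝ) ^ (-(K : ℝ) / 2) with hε
  have hKpos : (0:ℝ) < K := by exact_mod_cast hK
  have hε0 : 0 < ε := Real.rpow_pos_of_pos (by norm_num) _
  have hε1 : ε < 1 := Real.rpow_lt_one_of_one_lt_of_neg (by norm_num) (by linarith)
  set ρ : ℝ := 1 - ε with hρ
  have hρ0 : 0 < ρ := by simp only [hρ]; linarith
  have hρ1 : ρ ≤ 1 := by simp only [hρ]; linarith
  have hP := nu_spec ρ K hρ0 hρ1 hK
  have hsum1 : ∑ k ∈ Finset.Icc 1 K, nuV ρ K k ≤ ∑ k ∈ Finset.Icc 1 K, ρ^(2^k-1) := by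
    apply Finset.sum_le_sum
    intro k hk
    rw [Finset.mem_Icc] at hk
    exact W_upper hP hρ0 k hk.1 hk.2
  have hsum2 : ∑ k ∈ Finset.Icc 1 K, ρ^(2^k-1) ≤ -logb 2 (1-ρ) :=
    F_bound K ρ hρ0.le (by simp only [hρ]; linarith)
  have heq : -logb 2 (1-ρ) = (K:ℝ)/2 := by
    have : (1:ℝ) - ρ = ε := by simp [hρ]
    rw [this, hε, Real.logb_rpow (by norm_num) (by norm_num)]
    ring
  calc ∑ k ∈ Finset.Icc 1 K, nuV ρ K k ≤ ∑ k ∈ Finset.Icc 1 K, ρ^(2^k-1) := hsum1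
    _ ≤ -logb 2 (1-ρ) := hsum2
    _ = (K:ℝ)/2 := heq

section Part2
variable {K : ℕ}

lemma part2 (hK : 1 ≤ K) :
    (K : ℝ) - Real.logb 2 K - 3 ≤ ∑ k ∈ Finset.Icc 1 K, nuV 1 K k := by
  have hP := nu_spec 1 K one_pos le_rfl hK
  show (K : ℝ) - Real.logb 2 K - 3 ≤ ∑ k ∈ Finset.Icc 1 K, extProfile K (nu 1 K) k
  set W : ℕ → ℝ := extProfile K (nu 1 K) with hW
  set c : ℝ := (W K)^2 with hc
  have hc0 : 0 ≤ c := sq_nonneg _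
  have hWle1 : ∀ j ≤ K, W j ≤ 1 := W_le_one hP
  have hWnn : ∀ j ≤ K, 0 ≤ W j := W_nonneg hP
  have hc1 : c ≤ 1 := by
    have h1 := hWle1 K le_rfl
    have h2 := hWnn K le_rfl
    nlinarith
  have htel : ∀ j, 1 ≤ j → j ≤ K → W j = (W (j-1))^2 - c := by
    intro j h1 h2
    have h3 : W j = 1 * ((W (j-1))^2 - (W K)^2) := W_tel hP j h1 h2
    rw [h3]; ring
  have hW0 : W 0 = 1 := hP.1
  -- lower bound W k ≥ 1 - c (2^k - 1)
  have hlow : ∀ k ≤ K, 1 - c*((2:ℝ)^k - 1) ≤ W k := by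
    intro k
    induction k with
    | zero => intro _; rw [hW0]; norm_num
    | succ k ih =>
        intro hk
        have h1 := ih (by omega)
        have h2 := htel (k+1) (by omega) hk
        rw [Nat.add_sub_cancel] at h2
        have h3 := hWle1 k (by omega)
        have h4 : (2:ℝ)^(k+1) = 2*2^k := by rw [pow_succ]; ring
        have hsq := sq_nonneg (W k - 1)
        rw [h2, h4]
        nlinarith
  -- upper bound W j ≤ (W 1)^(2^(j-1))
  have hW1 : W 1 = 1 - c := by
    have := htel 1 le_rfl hK
    simpa [hW0] using this
  have hpowb : ∀ j, 1 ≤ j → j ≤ K → W j ≤ (W 1)^(2^(j-1)) := by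
    intro j h1
    induction j, h1 using Nat.le_induction with
    | base => intro _; simpa using le_rfl
    | succ j hj ih =>
        intro hjK
        have h1 := ih (by omega)
        have h2 := htel (j+1) (by omega) hjK
        rw [Nat.add_sub_cancel] at h2
        have h3 := hWnn j (by omega)
        have hb : (0:ℝ) ≤ (W 1)^(2^(j-1)) := pow_nonneg (hWnn 1 (by omega)) _
        have hsq : (W j)^2 ≤ ((W 1)^(2^(j-1)))^2 := by
          apply sq_le_sq' (by linarith) h1
        have h5 : W (j+1) ≤ ((W 1)^(2^(j-1)))^2 := by rw [h2]; linarith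
        have hexp : 2^(j-1)*2 = 2^((j+1)-1) := by
          rw [Nat.add_sub_cancel, ← pow_succ]
          congr 1
          omega
        calc W (j+1) ≤ ((W 1)^(2^(j-1)))^2 := h5
          _ = (W 1)^(2^(j-1)*2) := by rw [pow_mul]
          _ = (W 1)^(2^((j+1)-1)) := by rw [hexp]
    -- done
  -- c * 2^K ≤ K * log 2   (for K ≥ 2)
  have hcK : 2 ≤ K → c * 2^K ≤ (K:ℝ) * Real.log 2 := by
    intro hK2
    have hWK := hpowb K hK le_rfl
    have hWKnn := hWnn K le_rfl
    have hcle : c ≤ (1-c)^(2^K) := by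
      have hb : (0:ℝ) ≤ (W 1)^(2^(K-1)) := pow_nonneg (hWnn 1 hK) _
      have hsq : (W K)^2 ≤ ((W 1)^(2^(K-1)))^2 := sq_le_sq' (by linarith) hWK
      have hexp : 2^(K-1)*2 = 2^K := by
        rw [← pow_succ]
        congr 1
        omega
      calc c = (W K)^2 := hc
        _ ≤ ((W 1)^(2^(K-1)))^2 := hsq
        _ = (W 1)^(2^(K-1)*2) := by rw [pow_mul]
        _ = (W 1)^(2^K) := by rw [hexp]
        _ = (1-c)^(2^K) := by rw [hW1]
    have hexp : (1-c)^(2^K) ≤ Real.exp (-(c * 2^K)) := by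
      have h1 : (1:ℝ)-c ≤ Real.exp (-c) := by linarith [Real.add_one_le_exp (-c)]
      calc (1-c)^(2^K) ≤ (Real.exp (-c))^(2^K) :=
            pow_le_pow_left₀ (by linarith) h1 _
        _ = Real.exp (-(c * 2^K)) := by
            rw [← Real.exp_nat_mul]
            congr 1
            push_cast
            ring
    by_contra hcon
    push_neg at hcon
    have hKlog : (1:ℝ) < (K:ℝ) * Real.log 2 := by
      have : (2:ℝ) ≤ K := by exact_mod_cast hK2
      nlinarith [Real.log_two_gt_d9]
    have h2K : (0:ℝ) < 2^K := by positivity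
    have hlt : Real.exp (-(c * 2^K)) < Real.exp (-((K:ℝ) * Real.log 2)) := by
      apply Real.exp_lt_exp.2
      linarith
    have hval : Real.exp (-((K:ℝ) * Real.log 2)) = 1/2^K := by
      rw [show -((K:ℝ) * Real.log 2) = (K:ℕ) * (-Real.log 2) by push_cast; ring,
        Real.exp_nat_mul, Real.exp_neg, Real.exp_log (by norm_num : (0:ℝ) < 2)]
      rw [one_div, inv_pow]
    have : c < 1/2^K := lt_of_le_of_lt (le_trans hcle hexp) (by rw [← hval]; exact hlt)
    have : c * 2^K < 1 := by
      rw [lt_div_iff₀ h2K] at this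
      linarith
    linarith
  -- sum lower bound by induction
  have hsuml : ∀ m ≤ K, (m:ℝ) - c * 2^(m+1) ≤ ∑ k ∈ Finset.Ioc 0 m, W k := by
    intro m
    induction m with
    | zero =>
        intro _
        rw [Finset.Ioc_self, Finset.sum_empty]
        push_cast
        nlinarith
    | succ m ih =>
        intro hm
        rw [Finset.sum_Ioc_succ_top (by omega)]
        have h1 := ih (by omega)
        have h2 := hlow (m+1) hm
        have h4 : (2:ℝ)^(m+1+1) = 2*2^(m+1) := by rw [pow_succ]; ring
        push_cast
        push_cast at h1
        nlinarith
  rcases Nat.lt_or_ge K 2 with hK1 | hK2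
  · -- K = 1
    have hKe : K = 1 := by omega
    subst hKe
    have h1 := hWnn 1 le_rfl
    have : ∑ k ∈ Finset.Icc 1 1, W k = W 1 := by simp
    rw [this]
    simp only [Nat.cast_one, Real.logb_one]
    linarith
  · -- main case
    set L : ℕ := Nat.clog 2 K with hL
    have hKle : K ≤ 2^L := Nat.le_pow_clog (by norm_num) K
    have hL1 : 1 ≤ L := by
      by_contra h
      have : L = 0 := by omega
      rw [this] at hKle
      omega
    have hLtK : L + 1 ≤ K := by
      have h2 : K ≤ 2^(K-1) := by
        have := Nat.lt_two_pow_self (n := K-1)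
        omega
      have h3 : L ≤ K - 1 := (Nat.clog_le_iff_le_pow (by norm_num : 1 < 2)).2 h2
      omega
    set m : ℕ := K - (L+1) with hm
    have hmK : m ≤ K := by omega
    have hsum := hsuml m hmK
    -- split the sum
    have hsplit : ∑ k ∈ Finset.Ioc 0 m, W k + ∑ k ∈ Finset.Ioc m K, W k
        = ∑ k ∈ Finset.Icc 1 K, W k := by
      rw [show Finset.Icc 1 K = Finset.Ioc 0 K from Finset.Icc_add_one_left_eq_Ioc 0 K]
      exact Finset.sum_Ioc_consecutive W (by omega) (by omega)
    have htail : 0 ≤ ∑ k ∈ Finset.Ioc m K, W k := by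
      apply Finset.sum_nonneg
      intro k hk
      rw [Finset.mem_Ioc] at hk
      exact hWnn k hk.2
    -- bound c * 2^(m+1) ≤ log 2 ≤ 1
    have hA : c * 2^(m+1) ≤ Real.log 2 := by
      have hKpos : (0:ℝ) < K := by positivity
      have hcast : ((2:ℝ)^L) * 2^(m+1) = 2^K := by
        rw [← pow_add]
        congr 1
        omega
      have hKle' : (K:ℝ) ≤ 2^L := by
        calc (K:ℝ) ≤ ((2^L : ℕ):ℝ) := by exact_mod_cast hKle
          _ = (2:ℝ)^L := by push_cast; ring
      have hck := hcK hK2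
      have hAnn : 0 ≤ c * 2^(m+1) := by positivity
      have h1 : (c * 2^(m+1)) * (K:ℝ) ≤ (c * 2^(m+1)) * 2^L :=
        mul_le_mul_of_nonneg_left hKle' hAnn
      have h2 : (c * 2^(m+1)) * 2^L = c * 2^K := by rw [mul_assoc, mul_comm ((2:ℝ)^(m+1)), hcast]
      have h3 : (c * 2^(m+1)) * (K:ℝ) ≤ (K:ℝ) * Real.log 2 := by
        calc (c * 2^(m+1)) * (K:ℝ) ≤ (c * 2^(m+1)) * 2^L := h1
          _ = c * 2^K := h2
          _ ≤ (K:ℝ) * Real.log 2 := hck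
      exact le_of_mul_le_mul_right (by linarith : (c * 2^(m+1)) * (K:ℝ) ≤ Real.log 2 * K) hKpos
    have hlog1 : Real.log 2 ≤ 1 := by linarith [Real.log_two_lt_d9]
    -- L ≤ logb 2 K + 1
    have hLb : (L:ℝ) ≤ Real.logb 2 K + 1 := by
      have h2L : 2^L ≤ 2*K := by
        have hpp : 2^(L-1) < K := by
          have h := Nat.pow_pred_clog_lt_self (by norm_num : 1 < 2) (by omega : 1 < K)
          rw [Nat.pred_eq_sub_one] at h
          exact h
        calc 2^L = 2 * 2^(L-1) := by rw [← pow_succ']; congr 1; omega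
          _ ≤ 2 * K := by omega
      have h2L' : ((2:ℝ))^L ≤ 2*(K:ℝ) := by
        calc ((2:ℝ))^L = ((2^L : ℕ):ℝ) := by push_cast; ring
          _ ≤ ((2*K : ℕ):ℝ) := by exact_mod_cast h2L
          _ = 2*(K:ℝ) := by push_cast; ring
      have := Real.logb_le_logb_of_le (by norm_num : (1:ℝ) < 2)
        (by positivity : (0:ℝ) < (2:ℝ)^L) h2L'
      rw [Real.logb_mul (by norm_num) (by positivity : (K:ℝ) ≠ 0)] at this
      rw [Real.logb_pow, Real.logb_self_eq_one (by norm_num)] at this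
      simp only [mul_one] at this
      linarith [this, Real.logb_self_eq_one (show (1:ℝ) < 2 by norm_num)]
    -- conclude
    have hmcast : (m:ℝ) = (K:ℝ) - ((L:ℝ)+1) := by
      rw [hm]
      push_cast [Nat.cast_sub hLtK]
      ring
    rw [← hsplit]
    have : (m:ℝ) - c * 2^(m+1) ≥ (K:ℝ) - Real.logb 2 K - 3 := by
      rw [hmcast]
      linarith
    linarith
end Part2
end TCAux


/-- `Σ_{k=1}^K ν_{1−2^{−K/2},K}(k) ≤ K/2` and
`Σ_{k=1}^K ν_{1,K}(k) ≥ K − log₂ K − 3`. -/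
theorem sum_nu_bounds (K : ℕ) (hK : 1 ≤ K) :
    (∑ k ∈ Finset.Icc 1 K, nuV (1 - (2 : ℝ) ^ (-(K : ℝ) / 2)) K k ≤ (K : ℝ) / 2) ∧
    ((K : ℝ) - Real.logb 2 K - 3 ≤ ∑ k ∈ Finset.Icc 1 K, nuV 1 K k) := by
  exact ⟨TCAux.part1 K hK, TCAux.part2 hK⟩
end
end
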